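/- arXiv:1911.07428 — 5 statements merged into one kernel-verified Lean document; each statement's English description precedes it below -/
import Mathlib

section
/- Let S be the n×n real skew-symmetric matrix with zero diagonal, all entries above the diagonal equal to 1 and all entries below the diagonal equal to -1. Then the spectral radius of S equals cot(π/(2n)). -/
open Complex Matrix Real

lemma mem_spec (n : ℕ) (S : Matrix (Fin n) (Fin n) ℂ) (μ : ℂ) :
    μ ∈ spectrum ℂ S ↔ ∃ v ≠ 0, S.mulVec v = μ • v := by
  rw [spectrum.mem_iff]
  rw [Matrix.isUnit_iff_isUnit_det, isUnit_iff_ne_zero, not_not,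
    ← Matrix.exists_mulVec_eq_zero_iff]
  constructor
  · rintro ⟨v, hv, h⟩
    refine ⟨v, hv, ?_⟩
    rw [Matrix.sub_mulVec] at h
    have : (algebraMap ℂ (Matrix (Fin n) (Fin n) ℂ) μ).mulVec v = μ • v := by
      funext i; simp [Matrix.algebraMap_eq_diagonal, Matrix.mulVec_diagonal]
    rw [this, sub_eq_zero] at h
    exact h.symm
  · rintro ⟨v, hv, h⟩
    refine ⟨v, hv, ?_⟩
    rw [Matrix.sub_mulVec, h]
    funext i; simp [Matrix.algebraMap_eq_diagonal, Matrix.mulVec_diagonal]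


variable {n : ℕ}

def Sm (n : ℕ) : Matrix (Fin n) (Fin n) ℂ :=
  Matrix.of fun i j : Fin n => if i < j then 1 else if j < i then -1 else 0

lemma Sm_apply (i j : Fin n) :
    Sm n i j = if i < j then 1 else if j < i then -1 else 0 := rfl

lemma row0 (v : Fin n → ℂ) (i : Fin n) (hi : (i:ℕ) = 0) :
    (Sm n).mulVec v i = (∑ j, v j) - v i := by
  have key : ∀ j : Fin n, Sm n i j * v j = v j - (if j = i then v j else 0) := by
    intro j
    rcases eq_or_ne j i with h | h
    · subst h; simp [Sm_apply, lt_irrefl]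
    · have hij : i < j := by
        rw [Fin.lt_def]
        have := Fin.val_ne_of_ne h
        omega
      simp [Sm_apply, hij, h]
  unfold Matrix.mulVec dotProduct
  simp only [key]
  rw [Finset.sum_sub_distrib, Finset.sum_ite_eq' Finset.univ i v]
  simp

lemma rowlast (v : Fin n → ℂ) (i : Fin n) (hi : (i:ℕ) + 1 = n) :
    (Sm n).mulVec v i = v i - ∑ j, v j := by
  have key : ∀ j : Fin n, Sm n i j * v j = (if j = i then v j else 0) - v j := by
    intro j
    rcases eq_or_ne j i with h | h
    · subst h; simp [Sm_apply, lt_irrefl]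
    · have hij : j < i := by
        rw [Fin.lt_def]
        have := Fin.val_ne_of_ne h
        have := j.isLt
        omega
      have hij' : ¬ i < j := by
        rw [Fin.lt_def]; omega
      simp [Sm_apply, hij, hij', h]
  unfold Matrix.mulVec dotProduct
  simp only [key]
  rw [Finset.sum_sub_distrib, Finset.sum_ite_eq' Finset.univ i v]
  simp

lemma rowdiff (v : Fin n → ℂ) (i j : Fin n) (hij : (i:ℕ) + 1 = (j:ℕ)) :
    (Sm n).mulVec v i - (Sm n).mulVec v j = v i + v j := by
  have key : ∀ k : Fin n, Sm n i k * v k - Sm n j k * v k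
      = (if k = i then v k else 0) + (if k = j then v k else 0) := by
    intro k
    rcases eq_or_ne k i with h | h
    · subst h
      have h2 : k ≠ j := by intro h3; rw [h3] at hij; omega
      have hkj : k < j := by rw [Fin.lt_def]; omega
      have hjk : ¬ j < k := by rw [Fin.lt_def]; omega
      simp [Sm_apply, lt_irrefl, hkj, hjk, h2]
    · rcases eq_or_ne k j with h2 | h2
      · subst h2
        have hik : i < k := by rw [Fin.lt_def]; omega
        have : ¬ k < i := by rw [Fin.lt_def]; omega
        simp [Sm_apply, lt_irrefl, hik, this, h]
      · have hki := Fin.val_ne_of_ne h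
        have hkj := Fin.val_ne_of_ne h2
        rcases lt_or_gt_of_ne hki with hlt | hgt
        · have h3 : k < i := Fin.lt_def.mpr hlt
          have h4 : k < j := by rw [Fin.lt_def]; omega
          have h5 : ¬ i < k := by rw [Fin.lt_def]; omega
          have h6 : ¬ j < k := Fin.lt_def.not.mpr (by omega)
          simp [Sm_apply, h3, h4, h5, h6, h, h2]
        · have h3 : i < k := Fin.lt_def.mpr hgt
          have h4 : j < k := by rw [Fin.lt_def]; omega
          have h5 : ¬ k < i := by rw [Fin.lt_def]; omega
          have h6 : ¬ k < j := Fin.lt_def.not.mpr (by omega)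
          simp [Sm_apply, h3, h4, h5, h6, h, h2]
  unfold Matrix.mulVec dotProduct
  rw [← Finset.sum_sub_distrib]
  simp only [key]
  rw [Finset.sum_add_distrib, Finset.sum_ite_eq' Finset.univ i v,
    Finset.sum_ite_eq' Finset.univ j v]
  simp


lemma key_exp (θ t : ℝ) (hs : Real.sin θ ≠ 0)
    (ht : t * Real.sin θ = Real.cos θ) :
    (t : ℂ) * Complex.I - 1
      = Complex.exp (2*θ*Complex.I) * ((t : ℂ) * Complex.I + 1) := by
  have h1 : (Real.cos θ : ℂ) * Complex.I + (Real.sin θ : ℂ)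
      = Complex.I * Complex.exp (-(θ:ℂ) * Complex.I) := by
    rw [Complex.exp_mul_I, Complex.cos_neg, Complex.sin_neg,
      ← Complex.ofReal_cos, ← Complex.ofReal_sin]
    ring_nf
    rw [Complex.I_sq]
    ring
  have h2 : (Real.cos θ : ℂ) * Complex.I - (Real.sin θ : ℂ)
      = Complex.I * Complex.exp ((θ:ℂ) * Complex.I) := by
    rw [Complex.exp_mul_I, ← Complex.ofReal_cos, ← Complex.ofReal_sin]
    ring_nf
    rw [Complex.I_sq]
    ring
  have h3 : Complex.exp (2*θ*Complex.I) * Complex.exp (-(θ:ℂ) * Complex.I)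
      = Complex.exp ((θ:ℂ) * Complex.I) := by
    rw [← Complex.exp_add]; ring_nf
  have hs' : (Real.sin θ : ℂ) ≠ 0 := by exact_mod_cast hs
  have hts : (t:ℂ) * (Real.sin θ : ℂ) = (Real.cos θ : ℂ) := by
    exact_mod_cast congrArg (fun x : ℝ => (x:ℂ)) ht
  set E := Complex.exp (2*θ*Complex.I)
  apply mul_right_cancel₀ hs'
  linear_combination (Complex.I - E*Complex.I) * hts + h2 - E*h1 - Complex.I*h3

lemma exists_theta (t : ℝ) : ∃ θ : ℝ, 0 < θ ∧ θ < π ∧ 0 < Real.sin θ ∧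
    t = Real.cos θ / Real.sin θ := by
  refine ⟨π/2 - Real.arctan t, ?_, ?_, ?_, ?_⟩
  · have := Real.arctan_lt_pi_div_two t; linarith
  · have := Real.neg_pi_div_two_lt_arctan t; linarith
  · rw [Real.sin_pi_div_two_sub]
    exact Real.cos_arctan_pos t
  · rw [Real.cos_pi_div_two_sub, Real.sin_pi_div_two_sub]
    rw [← Real.tan_eq_sin_div_cos, Real.tan_arctan]

lemma angle_quant (n : ℕ) (hn : 0 < n) (θ : ℝ) (h0 : 0 < θ) (h1 : θ < π)
    (h : Complex.exp (2*θ*Complex.I) ^ n = -1) :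
    π / (2*n) ≤ θ ∧ θ ≤ π - π / (2*n) := by
  have hexp : Complex.exp ((n:ℂ) * (2*θ*Complex.I)) = -1 := by
    rw [Complex.exp_nat_mul, h]
  have hone : Complex.exp ((n:ℂ) * (2*θ*Complex.I) - π * Complex.I) = 1 := by
    rw [Complex.exp_sub, hexp, Complex.exp_pi_mul_I]
    norm_num
  rw [Complex.exp_eq_one_iff] at hone
  obtain ⟨k, hk⟩ := hone
  have hreal : 2 * (n:ℝ) * θ - π = (k:ℝ) * (2 * π) := by
    have : (((2 * (n:ℝ) * θ - π : ℝ)) : ℂ) = (((k:ℝ) * (2 * π) : ℝ) : ℂ) := by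
      apply mul_right_cancel₀ Complex.I_ne_zero
      push_cast
      linear_combination hk
    exact_mod_cast this
  have hπ := Real.pi_pos
  have hn' : (0:ℝ) < (n:ℝ) := by exact_mod_cast hn
  have hk0 : 0 ≤ k := by
    by_contra hneg
    push_neg at hneg
    have hk1 : k ≤ -1 := by omega
    have : (k:ℝ) ≤ -1 := by exact_mod_cast hk1
    nlinarith
  have hkn : k ≤ (n:ℤ) - 1 := by
    by_contra hge
    push_neg at hge
    have hk1 : (n:ℤ) ≤ k := by omega
    have : (n:ℝ) ≤ (k:ℝ) := by exact_mod_cast hk1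
    nlinarith
  have hk0' : (0:ℝ) ≤ (k:ℝ) := by exact_mod_cast hk0
  have hkn' : (k:ℝ) ≤ (n:ℝ) - 1 := by exact_mod_cast hkn
  constructor
  · rw [div_le_iff₀ (by positivity)]
    nlinarith
  · have : π / (2*(n:ℝ)) ≤ π - θ := by
      rw [div_le_iff₀ (by positivity)]
      nlinarith
    linarith

lemma cot_bound (a θ : ℝ) (ha0 : 0 < a) (h1 : a ≤ θ) (h2 : θ ≤ π - a)
    (hsθ : 0 < Real.sin θ) (hsa : 0 < Real.sin a) :
    |Real.cos θ / Real.sin θ| ≤ Real.cos a / Real.sin a := by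
  rw [abs_div, abs_of_pos hsθ, div_le_div_iff₀ hsθ hsa]
  have hsub : 0 ≤ Real.sin (θ - a) :=
    Real.sin_nonneg_of_nonneg_of_le_pi (by linarith) (by linarith)
  have hadd : 0 ≤ Real.sin (θ + a) :=
    Real.sin_nonneg_of_nonneg_of_le_pi (by linarith) (by linarith)
  rw [Real.sin_sub] at hsub
  rw [Real.sin_add] at hadd
  calc |Real.cos θ| * Real.sin a = |Real.cos θ * Real.sin a| := by
        rw [abs_mul, abs_of_pos hsa]
    _ ≤ Real.cos a * Real.sin θ := abs_le.mpr ⟨by linarith, by linarith⟩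

lemma eig_bound (n : ℕ) (hn : 0 < n) (μ : ℂ) (v : Fin n → ℂ) (hv : v ≠ 0)
    (h : (Sm n).mulVec v = μ • v) :
    ‖μ‖ ≤ Real.cot (π / (2*n)) := by
  have hrec : ∀ i j : Fin n, (i:ℕ) + 1 = (j:ℕ) → (μ - 1) * v i = (μ + 1) * v j := by
    intro i j hij
    have hd := rowdiff v i j hij
    rw [h] at hd
    simp only [Pi.smul_apply, smul_eq_mul] at hd
    linear_combination hd
  -- the last index
  have hlast : ((⟨n-1, by omega⟩ : Fin n) : ℕ) + 1 = n := by simp; omega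
  have hμ1 : μ + 1 ≠ 0 := by
    intro hμ
    have hμ' : μ = -1 := by linear_combination hμ
    -- all entries with successor are zero
    have hz : ∀ i : Fin n, (i:ℕ) + 1 < n → v i = 0 := by
      intro i hi
      have := hrec i ⟨(i:ℕ)+1, hi⟩ rfl
      rw [hμ'] at this
      have h2 : (-2 : ℂ) * v i = 0 := by linear_combination this
      simpa using h2
    set L : Fin n := ⟨n-1, by omega⟩ with hL
    have hsum : (∑ j, v j) = v L := by
      apply Finset.sum_eq_single L
      · intro j _ hj
        apply hz
        have : (j:ℕ) ≠ n - 1 := by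
          intro hc; exact hj (Fin.ext (by simp [hL, hc]))
        have := j.isLt; omega
      · simp
    have hlr := rowlast v L hlast
    rw [h, hsum] at hlr
    simp only [Pi.smul_apply, smul_eq_mul, hμ'] at hlr
    have hvL : v L = 0 := by linear_combination -hlr
    apply hv
    funext i
    rcases lt_or_ge ((i:ℕ)+1) n with hi | hi
    · exact hz i hi
    · have : i = L := Fin.ext (by simp [hL]; omega)
      rw [this]
      simpa using hvL
  set r : ℂ := (μ - 1) / (μ + 1) with hr
  have hrv : ∀ i j : Fin n, (i:ℕ) + 1 = (j:ℕ) → v j = r * v i := by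
    intro i j hij
    rw [hr, div_mul_eq_mul_div, eq_div_iff hμ1]
    linear_combination -(hrec i j hij)
  have hgeom : ∀ m (hm : m < n), v ⟨m, hm⟩ = r ^ m * v ⟨0, hn⟩ := by
    intro m
    induction m with
    | zero => intro hm; simp
    | succ k ih =>
      intro hm
      have hk : k < n := by omega
      rw [hrv ⟨k, hk⟩ ⟨k+1, hm⟩ rfl, ih hk, pow_succ]
      ring
  have hv0 : v ⟨0, hn⟩ ≠ 0 := by
    intro h0
    apply hv; funext i
    have hgi := hgeom i.val i.isLt
    simp only [Fin.eta] at hgi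
    rw [hgi, h0]; simp
  have h0 := row0 v ⟨0, hn⟩ rfl
  rw [h] at h0
  simp only [Pi.smul_apply, smul_eq_mul] at h0
  have hsum : (∑ j, v j) = (∑ m ∈ Finset.range n, r ^ m) * v ⟨0, hn⟩ := by
    calc (∑ j, v j) = ∑ j : Fin n, r ^ (j:ℕ) * v ⟨0, hn⟩ :=
          Finset.sum_congr rfl (fun j _ => by
            simpa [Fin.eta] using hgeom j.val j.isLt)
      _ = ∑ m ∈ Finset.range n, r ^ m * v ⟨0, hn⟩ :=
          Fin.sum_univ_eq_sum_range (fun m => r ^ m * v ⟨0, hn⟩) n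
      _ = (∑ m ∈ Finset.range n, r ^ m) * v ⟨0, hn⟩ := (Finset.sum_mul _ _ _).symm
  have hsum2 : (∑ m ∈ Finset.range n, r ^ m) = μ + 1 := by
    rw [hsum] at h0
    apply mul_right_cancel₀ hv0
    linear_combination -h0
  have hrne1 : r ≠ 1 := by
    intro h1
    rw [hr, div_eq_one_iff_eq hμ1] at h1
    have h2 : (2:ℂ) = 0 := by linear_combination -h1
    norm_num at h2
  have hrn : r ^ n = -1 := by
    have hg := geom_sum_eq hrne1 n
    rw [hg] at hsum2
    have hr1 : r - 1 ≠ 0 := sub_ne_zero.mpr hrne1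
    rw [div_eq_iff hr1] at hsum2
    have hrmul : r * (μ + 1) = μ - 1 := by rw [hr]; field_simp
    linear_combination hsum2 + hrmul
  have habs : ‖r‖ = 1 := by
    have h1 : ‖r‖ ^ n = 1 := by
      rw [← norm_pow, hrn]; simp
    rcases lt_trichotomy (‖r‖) 1 with hlt | heq | hgt
    · have h3 := pow_lt_one₀ (norm_nonneg r) hlt hn.ne'
      rw [h1] at h3; exact absurd h3 (lt_irrefl 1)
    · exact heq
    · have h3 := one_lt_pow₀ hgt hn.ne'
      rw [h1] at h3; exact absurd h3 (lt_irrefl 1)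
  have hre : μ.re = 0 := by
    have habs2 : ‖μ - 1‖ = ‖μ + 1‖ := by
      have h2 : ‖μ + 1‖ ≠ 0 := by
        simpa using hμ1
      rw [hr, norm_div, div_eq_one_iff_eq h2] at habs
      exact habs
    have hsq := congrArg (fun x => x ^ 2) habs2
    simp only [Complex.sq_norm, Complex.normSq_apply, Complex.sub_re,
      Complex.add_re, Complex.sub_im, Complex.add_im, Complex.one_re,
      Complex.one_im] at hsq
    nlinarith [hsq]
  set t := μ.im with htdef
  have hμt : μ = (t:ℂ) * Complex.I := by
    apply Complex.ext <;> simp [hre, htdef]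
  obtain ⟨θ, hθ0, hθπ, hθs, hθt⟩ := exists_theta t
  have hts : t * Real.sin θ = Real.cos θ := by
    rw [hθt]; field_simp
  have hkey := key_exp θ t hθs.ne' hts
  have hμ1' : (t:ℂ) * Complex.I + 1 ≠ 0 := by rw [← hμt]; exact hμ1
  have hreq : r = Complex.exp (2*θ*Complex.I) := by
    rw [hr, hμt, div_eq_iff hμ1']
    exact hkey
  have hrn' : Complex.exp (2*θ*Complex.I) ^ n = -1 := by rw [← hreq]; exact hrn
  obtain ⟨hb1, hb2⟩ := angle_quant n hn θ hθ0 hθπ hrn'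
  have hπ := Real.pi_pos
  have hn' : (0:ℝ) < (n:ℝ) := by exact_mod_cast hn
  have ha0 : 0 < π / (2*(n:ℝ)) := by positivity
  have hsa : 0 < Real.sin (π / (2*(n:ℝ))) := by
    apply Real.sin_pos_of_pos_of_lt_pi ha0
    rw [div_lt_iff₀ (by positivity)]
    have hn1 : (1:ℝ) ≤ (n:ℝ) := by exact_mod_cast hn
    nlinarith
  have hbound := cot_bound (π / (2*(n:ℝ))) θ ha0 hb1 hb2 hθs hsa
  rw [← hθt] at hbound
  rw [Real.cot_eq_cos_div_sin]
  calc ‖μ‖ = |t| := by rw [hμt]; simp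
    _ ≤ _ := hbound

lemma exist (n : ℕ) (hn : 0 < n) :
    ∃ v : Fin n → ℂ, v ≠ 0 ∧ (Sm n).mulVec v =
      (((Real.cot (π / (2*(n:ℝ))) : ℝ) : ℂ) * Complex.I) • v := by
  set a : ℝ := π / (2*(n:ℝ)) with ha
  have hπ := Real.pi_pos
  have hn1 : (1:ℝ) ≤ (n:ℝ) := by exact_mod_cast hn
  have ha0 : 0 < a := by rw [ha]; positivity
  have haπ : a < π := by
    rw [ha, div_lt_iff₀ (by positivity)]
    nlinarith
  have hsa : 0 < Real.sin a := Real.sin_pos_of_pos_of_lt_pi ha0 haπ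
  have hts : Real.cot a * Real.sin a = Real.cos a := by
    rw [Real.cot_eq_cos_div_sin]; field_simp
  have hkey := key_exp a (Real.cot a) hsa.ne' hts
  set μ : ℂ := ((Real.cot a : ℝ) : ℂ) * Complex.I with hμ
  set r : ℂ := Complex.exp (2*a*Complex.I) with hrdef
  have hrn : r ^ n = -1 := by
    rw [hrdef, ← Complex.exp_nat_mul]
    have hna : (n:ℝ) * (2*a) = π := by
      rw [ha]; field_simp
    have : (n:ℂ) * (2*(a:ℂ)*Complex.I) = (π:ℂ) * Complex.I := by
      have := congrArg (fun x : ℝ => (x:ℂ) * Complex.I) hna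
      push_cast at this ⊢
      linear_combination this
    rw [this, Complex.exp_pi_mul_I]
  have hrne1 : r ≠ 1 := by
    intro h1
    rw [h1] at hkey
    have h2 : (2:ℂ) = 0 := by linear_combination -hkey
    norm_num at h2
  set v : Fin n → ℂ := fun i => r ^ (i:ℕ) with hv
  refine ⟨v, ?_, ?_⟩
  · intro h0
    have h00 : v ⟨0, hn⟩ = 0 := by rw [h0]; rfl
    simp [hv] at h00
  · have claim : ∀ m (hm : m < n), (Sm n).mulVec v ⟨m, hm⟩ = μ * v ⟨m, hm⟩ := by
      intro m
      induction m with
      | zero =>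
        intro hm
        rw [row0 v ⟨0, hm⟩ rfl]
        have hsum : (∑ j, v j) = μ + 1 := by
          calc (∑ j, v j) = ∑ m ∈ Finset.range n, r ^ m :=
                Fin.sum_univ_eq_sum_range (fun m => r ^ m) n
            _ = (r ^ n - 1) / (r - 1) := geom_sum_eq hrne1 n
            _ = μ + 1 := by
                rw [hrn, div_eq_iff (sub_ne_zero.mpr hrne1)]
                linear_combination hkey
        rw [hsum]
        have e0 : v ⟨0, hm⟩ = 1 := rfl
        rw [e0]; ring
      | succ k ih =>
        intro hm
        have hk : k < n := by omega
        have hd := rowdiff v ⟨k, hk⟩ ⟨k+1, hm⟩ rfl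
        have hih := ih hk
        have hstep : (Sm n).mulVec v ⟨k+1, hm⟩
            = μ * v ⟨k, hk⟩ - (v ⟨k, hk⟩ + v ⟨k+1, hm⟩) := by
          linear_combination hih - hd
        rw [hstep]
        have e1 : v ⟨k, hk⟩ = r ^ k := rfl
        have e2 : v ⟨k+1, hm⟩ = r ^ (k+1) := rfl
        rw [e1, e2, pow_succ]
        linear_combination (r ^ k) * hkey
    funext i
    have hc := claim i.val i.isLt
    simp only [Fin.eta] at hc
    rw [Pi.smul_apply, smul_eq_mul, hc]


theorem stmt_5 (n : ℕ) (hn : 0 < n)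
    (S : Matrix (Fin n) (Fin n) ℂ)
    (hS : S = Matrix.of fun i j : Fin n =>
      if i < j then 1 else if j < i then -1 else 0) :
    sSup ((fun μ => ‖μ‖) '' spectrum ℂ S) =
      Real.cot (π / (2 * n)) := by
  have hS' : S = Sm n := hS
  have hπ := Real.pi_pos
  have hn1 : (1:ℝ) ≤ (n:ℝ) := by exact_mod_cast hn
  have ha0 : 0 < π / (2*(n:ℝ)) := by positivity
  have ha2 : π / (2*(n:ℝ)) ≤ π / 2 := by
    apply div_le_div_of_nonneg_left hπ.le (by norm_num)
    linarith
  have hsa : 0 < Real.sin (π / (2*(n:ℝ))) := by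
    apply Real.sin_pos_of_pos_of_lt_pi ha0
    linarith
  have hc0 : 0 ≤ Real.cot (π / (2*(n:ℝ))) := by
    rw [Real.cot_eq_cos_div_sin]
    apply div_nonneg _ hsa.le
    apply Real.cos_nonneg_of_mem_Icc
    constructor <;> [linarith; linarith]
  apply IsGreatest.csSup_eq
  constructor
  · obtain ⟨v, hv, hmv⟩ := exist n hn
    refine ⟨((Real.cot (π / (2*(n:ℝ))) : ℝ) : ℂ) * Complex.I, ?_, ?_⟩
    · rw [mem_spec]
      exact ⟨v, hv, by rw [hS']; exact hmv⟩
    · show ‖(((Real.cot (π / (2*(n:ℝ))) : ℝ) : ℂ) * Complex.I)‖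
          = Real.cot (π / (2 * (n:ℝ)))
      rw [norm_mul, Complex.norm_I, Complex.norm_real, Real.norm_eq_abs, mul_one,
        _root_.abs_of_nonneg hc0]
  · rintro x ⟨μ, hμ, rfl⟩
    rw [mem_spec] at hμ
    obtain ⟨v, hv, hmv⟩ := hμ
    exact eig_bound n hn μ v hv (by rw [← hS']; exact hmv)
end

section
/- Let G^σ be any oriented simple graph on n vertices with skew-adjacency matrix S(G^σ) (entries s_{ij} = 1 if i→j is an arc, s_{ji} = -1, and 0 if no edge). Then the spectral radius of S(G^σ) is at most cot(π/(2n)). -/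
open Complex Matrix Real Finset


noncomputable def tg (n : ℕ) (j k : Fin n) : ℝ :=
  if j < k then 1 else if k < j then -1 else 0

lemma tg_antisymm (n : ℕ) (j k : Fin n) : tg n k j = - tg n j k := by
  unfold tg
  rcases lt_trichotomy j k with h|h|h
  · rw [if_neg (asymm h), if_pos h, if_pos h]
  · simp [h, lt_irrefl]
  · rw [if_pos h, if_neg (asymm h), if_pos h]; norm_num

-- eigen relation
lemma eigenrel (n : ℕ) (r : ℂ) (hr1 : r ≠ 1) (hrn : r ^ n = -1) (j : Fin n) :
    ∑ k : Fin n, (tg n j k : ℂ) * r ^ ((k : ℕ) + 1)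
      = (-(r + 1) / (r - 1)) * r ^ ((j : ℕ) + 1) := by
  have hsub : r - 1 ≠ 0 := sub_ne_zero.mpr hr1
  have hG : ∀ m : ℕ, ∑ t ∈ range m, r ^ (t + 1) = r * ((r ^ m - 1) / (r - 1)) := by
    intro m
    rw [← geom_sum_eq hr1 m, Finset.mul_sum]
    exact Finset.sum_congr rfl fun t _ => by ring
  have key : ∑ k : Fin n, (tg n j k : ℂ) * r ^ ((k : ℕ) + 1)
      = ∑ t ∈ range n, (if (j:ℕ) < t then (1:ℂ) else if t < (j:ℕ) then -1 else 0) * r ^ (t + 1) := by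
    rw [← Fin.sum_univ_eq_sum_range (fun t => (if (j:ℕ) < t then (1:ℂ) else if t < (j:ℕ) then -1 else 0) * r ^ (t + 1)) n]
    refine Finset.sum_congr rfl fun k _ => ?_
    unfold tg
    rcases lt_trichotomy j k with h|h|h
    · rw [if_pos h, if_pos (by exact_mod_cast h)]; norm_num
    · simp [h, lt_irrefl]
    · rw [if_neg (asymm h), if_pos h, if_neg (by exact_mod_cast asymm h), if_pos (by exact_mod_cast h)]
      norm_num
  rw [key]
  have hjn : (j:ℕ) < n := j.isLt
  have split1 : ∑ t ∈ range n, (if (j:ℕ) < t then (1:ℂ) else if t < (j:ℕ) then -1 else 0) * r ^ (t + 1)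
      = (∑ t ∈ range n, r ^ (t+1) - ∑ t ∈ range ((j:ℕ)+1), r ^ (t+1)) - ∑ t ∈ range (j:ℕ), r ^ (t+1) := by
    rw [← Finset.sum_Ico_eq_sub _ (by omega), Finset.range_eq_Ico,
      ← Finset.sum_Ico_consecutive _ (Nat.zero_le (j:ℕ)) (le_of_lt hjn),
      ← Finset.sum_Ico_consecutive _ (Nat.le_succ (j:ℕ)) (by omega : (j:ℕ)+1 ≤ n)]
    have h1 : ∑ t ∈ Ico 0 (j:ℕ), (if (j:ℕ) < t then (1:ℂ) else if t < (j:ℕ) then -1 else 0) * r ^ (t + 1)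
        = - ∑ t ∈ Ico 0 (j:ℕ), r ^ (t+1) := by
      rw [← Finset.sum_neg_distrib]
      refine Finset.sum_congr rfl fun t ht => ?_
      have := (Finset.mem_Ico.mp ht).2
      rw [if_neg (by omega), if_pos this]; ring
    have h2 : ∑ t ∈ Ico (j:ℕ) ((j:ℕ)+1), (if (j:ℕ) < t then (1:ℂ) else if t < (j:ℕ) then -1 else 0) * r ^ (t + 1) = 0 := by
      rw [Finset.sum_Ico_eq_sum_range]
      simp
    have h3 : ∑ t ∈ Ico ((j:ℕ)+1) n, (if (j:ℕ) < t then (1:ℂ) else if t < (j:ℕ) then -1 else 0) * r ^ (t + 1)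
        = ∑ t ∈ Ico ((j:ℕ)+1) n, r ^ (t+1) := by
      refine Finset.sum_congr rfl fun t ht => ?_
      have := (Finset.mem_Ico.mp ht).1
      rw [if_pos (by omega)]; ring
    rw [h1, h2, h3, Finset.sum_Ico_eq_sub _ (by omega : (j:ℕ)+1 ≤ n)]
    have : ∑ t ∈ Ico 0 (j:ℕ), r ^ (t+1) = ∑ t ∈ range (j:ℕ), r ^ (t+1) := by
      rw [Finset.range_eq_Ico]
    rw [this]
    ring
  rw [split1, hG, hG, hG, hrn]
  field_simp
  ring


noncomputable def ee (n m : ℕ) : ℂ :=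
  Complex.exp ((((2 * m + 1 : ℕ) : ℝ) * π / n : ℝ) * I)

lemma ee_pow_n (n m : ℕ) (hn : 0 < n) : (ee n m) ^ n = -1 := by
  have hn' : (n : ℂ) ≠ 0 := Nat.cast_ne_zero.mpr hn.ne'
  unfold ee
  rw [← Complex.exp_nat_mul]
  have : (n : ℂ) * ((((2 * m + 1 : ℕ) : ℝ) * π / n : ℝ) * I) = ((2*m+1 : ℕ) : ℂ) * (↑π * I) := by
    push_cast
    field_simp
  rw [this, Complex.exp_nat_mul, Complex.exp_pi_mul_I]
  exact Odd.neg_one_pow ⟨m, by ring⟩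

lemma ee_ne_one (n m : ℕ) (hn : 0 < n) : ee n m ≠ 1 := by
  intro h
  have := ee_pow_n n m hn
  rw [h, one_pow] at this
  norm_num at this

lemma ee_conj (n m : ℕ) : (starRingEnd ℂ) (ee n m) = Complex.exp (-((((2 * m + 1 : ℕ) : ℝ) * π / n : ℝ) * I)) := by
  unfold ee
  rw [← Complex.exp_conj]
  congr 1
  rw [_root_.map_mul, Complex.conj_ofReal, Complex.conj_I]
  ring

-- orthogonality
lemma ortho (n : ℕ) (hn : 0 < n) (j k : Fin n) :
    ∑ m ∈ range n, (starRingEnd ℂ) ((ee n m) ^ ((j:ℕ)+1)) * (ee n m) ^ ((k:ℕ)+1)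
      = if j = k then (n : ℂ) else 0 := by
  have hn' : (n : ℂ) ≠ 0 := Nat.cast_ne_zero.mpr hn.ne'
  have term : ∀ m, (starRingEnd ℂ) ((ee n m) ^ ((j:ℕ)+1)) * (ee n m) ^ ((k:ℕ)+1)
      = Complex.exp ((((k:ℕ):ℂ) - ((j:ℕ):ℂ)) * (((2 * m + 1 : ℕ) : ℝ) * π / n : ℝ) * I) := by
    intro m
    rw [_root_.map_pow, ee_conj]
    unfold ee
    rw [← Complex.exp_nat_mul, ← Complex.exp_nat_mul, ← Complex.exp_add]
    congr 1
    push_cast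
    ring
  rw [Finset.sum_congr rfl fun m _ => term m]
  by_cases hjk : j = k
  · subst hjk
    simp
  · rw [if_neg hjk]
    set c : ℂ := (((k:ℕ):ℂ) - ((j:ℕ):ℂ)) with hc
    have term2 : ∀ m, Complex.exp (c * (((2 * m + 1 : ℕ) : ℝ) * π / n : ℝ) * I)
        = Complex.exp (c * π / n * I) * (Complex.exp (c * (2 * π) / n * I)) ^ m := by
      intro m
      rw [← Complex.exp_nat_mul, ← Complex.exp_add]
      congr 1
      push_cast
      ring
    rw [Finset.sum_congr rfl fun m _ => term2 m, ← Finset.mul_sum]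
    have hd : ∃ d : ℤ, (d : ℂ) = c ∧ d ≠ 0 ∧ d.natAbs < n := by
      refine ⟨(k : ℤ) - (j : ℤ), by push_cast [hc]; ring, ?_, ?_⟩
      · intro h
        apply hjk
        have : (k : ℤ) = (j : ℤ) := by omega
        exact (Fin.ext (by exact_mod_cast this.symm))
      · omega
    obtain ⟨d, hdc, hd0, hdn⟩ := hd
    have hπ : (π : ℂ) ≠ 0 := by exact_mod_cast Real.pi_ne_zero
    have hq1 : Complex.exp (c * (2 * π) / n * I) ≠ 1 := by
      intro h
      rw [Complex.exp_eq_one_iff] at h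
      obtain ⟨t, ht⟩ := h
      have hcd : c = (t : ℂ) * n := by
        have h2 : c * (2 * ↑π) * I = ↑t * (2 * ↑π * I) * n := by
          field_simp at ht
          linear_combination (2 * ↑π * I) * ht
        have key : c * (2 * ↑π * I) = ((t:ℂ) * n) * (2 * ↑π * I) := by linear_combination h2
        exact mul_right_cancel₀ (mul_ne_zero (mul_ne_zero two_ne_zero hπ) Complex.I_ne_zero) key
      rw [← hdc] at hcd
      have hdt : d = t * n := by exact_mod_cast hcd
      have ht0 : t ≠ 0 := by rintro rfl; simp at hdt; omega
      have : n ≤ d.natAbs := by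
        rw [hdt, Int.natAbs_mul, Int.natAbs_natCast]
        calc n = 1 * n := (one_mul n).symm
        _ ≤ t.natAbs * n := Nat.mul_le_mul_right n (Nat.one_le_iff_ne_zero.mpr (Int.natAbs_ne_zero.mpr ht0))
      omega
    have hqn : (Complex.exp (c * (2 * π) / n * I)) ^ n = 1 := by
      rw [← Complex.exp_nat_mul]
      have : (n:ℂ) * (c * (2 * π) / n * I) = d * (2 * π * I) := by
        rw [← hdc]
        field_simp
      rw [this]
      exact Complex.exp_int_mul_two_pi_mul_I d
    rw [geom_sum_eq hq1, hqn]
    simp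


lemma abs_exp_sub_one (θ : ℝ) :
    ‖Complex.exp (↑θ * I) - 1‖ = 2 * |Real.sin (θ/2)| := by
  have h : ‖Complex.exp (↑θ * I) - 1‖ ^ 2 = (2 * |Real.sin (θ/2)|)^2 := by
    rw [Complex.sq_norm, Complex.normSq_apply]
    simp only [Complex.sub_re, Complex.sub_im, Complex.exp_ofReal_mul_I_re,
      Complex.exp_ofReal_mul_I_im, Complex.one_re, Complex.one_im, sub_zero]
    rw [mul_pow, _root_.sq_abs]
    nlinarith [Real.cos_two_mul (θ/2), Real.sin_sq_add_cos_sq (θ/2), Real.sin_sq_add_cos_sq θ,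
      (by ring_nf : Real.cos (2*(θ/2)) = Real.cos θ)]
  have h1 : (0:ℝ) ≤ ‖_‖ := norm_nonneg (Complex.exp (↑θ * I) - 1)
  nlinarith [abs_nonneg (Real.sin (θ/2))]

lemma abs_exp_add_one (θ : ℝ) :
    ‖Complex.exp (↑θ * I) + 1‖ = 2 * |Real.cos (θ/2)| := by
  have h : ‖Complex.exp (↑θ * I) + 1‖ ^ 2 = (2 * |Real.cos (θ/2)|)^2 := by
    rw [Complex.sq_norm, Complex.normSq_apply]
    simp only [Complex.add_re, Complex.add_im, Complex.exp_ofReal_mul_I_re,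
      Complex.exp_ofReal_mul_I_im, Complex.one_re, Complex.one_im, add_zero]
    rw [mul_pow, _root_.sq_abs]
    nlinarith [Real.cos_two_mul (θ/2), Real.sin_sq_add_cos_sq (θ/2), Real.sin_sq_add_cos_sq θ,
      (by ring_nf : Real.cos (2*(θ/2)) = Real.cos θ)]
  have h1 : (0:ℝ) ≤ ‖_‖ := norm_nonneg (Complex.exp (↑θ * I) + 1)
  nlinarith [abs_nonneg (Real.cos (θ/2))]

lemma sin_mono_aux {a b : ℝ} (ha : 0 ≤ a) (hab : a ≤ b) (hb : b ≤ π/2) :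
    Real.sin a ≤ Real.sin b := by
  have := Real.strictMonoOn_sin.monotoneOn (a := a) (b := b)
  apply this ⟨by linarith, by linarith⟩ ⟨by linarith [Real.pi_pos], hb⟩ hab

lemma lam_bound (n m : ℕ) (hn : 0 < n) (hm : m < n) :
    ‖-(ee n m + 1) / (ee n m - 1)‖ ≤ Real.cot (π / (2*n)) := by
  have hπ := Real.pi_pos
  have hnR : (0:ℝ) < n := Nat.cast_pos.mpr hn
  have hmR : (m:ℝ) ≤ (n:ℝ) - 1 := by
    have : (m:ℝ) + 1 ≤ n := by exact_mod_cast hm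
    linarith
  set θ : ℝ := ((2 * m + 1 : ℕ) : ℝ) * π / n with hθ
  set β : ℝ := θ / 2 with hβ
  set γ : ℝ := π / (2*n) with hγ
  have hβval : β = (2*(m:ℝ)+1) * π / (2*n) := by
    rw [hβ, hθ]; push_cast; ring
  have hγpos : 0 < γ := by rw [hγ]; positivity
  have hγβ : γ ≤ β := by
    rw [hβval, hγ, div_le_div_iff₀ (by linarith) (by linarith)]
    nlinarith [mul_nonneg (mul_nonneg (Nat.cast_nonneg m : (0:ℝ) ≤ m) hπ.le) hnR.le]
  have hβπγ : β ≤ π - γ := by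
    have h2n : (0:ℝ) < 2*n := by linarith
    rw [hβval, hγ, div_le_iff₀ h2n]
    have hexp : (π - π/(2*(n:ℝ)))*(2*n) = 2*n*π - π := by field_simp
    rw [hexp]
    nlinarith [mul_nonneg (show (0:ℝ) ≤ (n:ℝ) - 1 - m by linarith) hπ.le]
  have hγhalf : γ ≤ π/2 := by
    rw [hγ, div_le_div_iff₀ (by linarith) (by linarith)]
    nlinarith [mul_nonneg (mul_nonneg (show (0:ℝ) ≤ (n:ℝ)-1 by linarith) hπ.le) hnR.le]
  have hβπ : β ≤ π := by linarith
  have hcos1 : Real.cos β ≤ Real.cos γ :=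
    Real.cos_le_cos_of_nonneg_of_le_pi (le_of_lt hγpos) hβπ hγβ
  have hcos2 : -Real.cos γ ≤ Real.cos β := by
    have := Real.cos_le_cos_of_nonneg_of_le_pi (by linarith : (0:ℝ) ≤ β) (by linarith : π - γ ≤ π) hβπγ
    rw [Real.cos_pi_sub] at this
    linarith
  have habscos : |Real.cos β| ≤ Real.cos γ := abs_le.mpr ⟨hcos2, hcos1⟩
  have hsinγ : 0 < Real.sin γ := Real.sin_pos_of_pos_of_lt_pi hγpos (by linarith)
  have hsinβ : Real.sin γ ≤ Real.sin β := by
    rcases le_total β (π/2) with h|h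
    · exact sin_mono_aux (le_of_lt hγpos) hγβ h
    · rw [← Real.sin_pi_sub β]
      exact sin_mono_aux (le_of_lt hγpos) (by linarith) (by linarith)
  have hcosγ : 0 ≤ Real.cos γ := Real.cos_nonneg_of_mem_Icc ⟨by linarith, hγhalf⟩
  have habs1 : ‖ee n m - 1‖ = 2 * Real.sin β := by
    rw [ee, abs_exp_sub_one, ← hθ, ← hβ, _root_.abs_of_nonneg (by linarith : (0:ℝ) ≤ Real.sin β)]
  have habs2 : ‖ee n m + 1‖ = 2 * |Real.cos β| := by
    rw [ee, abs_exp_add_one, ← hθ, ← hβ]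
  rw [norm_div, norm_neg, habs1, habs2, Real.cot_eq_cos_div_sin]
  have : 2 * |Real.cos β| / (2 * Real.sin β) = |Real.cos β| / Real.sin β := by
    rw [mul_div_mul_left _ _ (two_ne_zero)]
  rw [this]
  exact div_le_div₀ hcosγ habscos hsinγ hsinβ


lemma ortho' (n : ℕ) (hn : 0 < n) (t k : Fin n) :
    ∑ m ∈ range n, (ee n m) ^ ((t:ℕ)+1) * (starRingEnd ℂ) ((ee n m) ^ ((k:ℕ)+1))
      = if t = k then (n : ℂ) else 0 := by
  rw [Finset.sum_congr rfl (fun m _ => mul_comm ((ee n m)^((t:ℕ)+1)) _), ortho n hn k t]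
  simp [eq_comm]

lemma nT (n : ℕ) (hn : 0 < n) (j k : Fin n) :
    ∑ m ∈ range n, (-(ee n m + 1)/(ee n m - 1)) *
        ((ee n m)^((j:ℕ)+1) * (starRingEnd ℂ) ((ee n m)^((k:ℕ)+1)))
      = (n : ℂ) * (tg n j k : ℂ) := by
  have h1 : ∀ m ∈ range n, (-(ee n m + 1)/(ee n m - 1)) *
        ((ee n m)^((j:ℕ)+1) * (starRingEnd ℂ) ((ee n m)^((k:ℕ)+1)))
      = ∑ t : Fin n, (tg n j t : ℂ) * ((ee n m)^((t:ℕ)+1) * (starRingEnd ℂ) ((ee n m)^((k:ℕ)+1))) := by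
    intro m _
    have he := eigenrel n (ee n m) (ee_ne_one n m hn) (ee_pow_n n m hn) j
    calc (-(ee n m + 1)/(ee n m - 1)) * ((ee n m)^((j:ℕ)+1) * (starRingEnd ℂ) ((ee n m)^((k:ℕ)+1)))
        = ((-(ee n m + 1)/(ee n m - 1)) * (ee n m)^((j:ℕ)+1)) * (starRingEnd ℂ) ((ee n m)^((k:ℕ)+1)) := by ring
      _ = (∑ t : Fin n, (tg n j t : ℂ) * (ee n m) ^ ((t : ℕ) + 1)) * (starRingEnd ℂ) ((ee n m)^((k:ℕ)+1)) := by rw [he]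
      _ = ∑ t : Fin n, (tg n j t : ℂ) * ((ee n m)^((t:ℕ)+1) * (starRingEnd ℂ) ((ee n m)^((k:ℕ)+1))) := by
          rw [Finset.sum_mul]; exact Finset.sum_congr rfl fun t _ => by ring
  rw [Finset.sum_congr rfl h1, Finset.sum_comm]
  have h2 : ∀ t : Fin n, ∑ m ∈ range n, (tg n j t : ℂ) * ((ee n m)^((t:ℕ)+1) * (starRingEnd ℂ) ((ee n m)^((k:ℕ)+1)))
      = (tg n j t : ℂ) * (if t = k then (n:ℂ) else 0) := by
    intro t
    rw [← Finset.mul_sum, ortho' n hn t k]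
  rw [Finset.sum_congr rfl (fun t _ => h2 t)]
  simp only [mul_ite, mul_zero]
  rw [Finset.sum_ite_eq' Finset.univ k (fun t => (tg n j t : ℂ) * (n:ℂ))]
  simp [mul_comm]

lemma keyQuad (n : ℕ) (hn : 0 < n) (u : Fin n → ℂ) :
    ‖∑ j : Fin n, ∑ k : Fin n, (tg n j k : ℂ) * ((starRingEnd ℂ) (u j) * u k)‖
      ≤ Real.cot (π/(2*n)) * ∑ j : Fin n, Complex.normSq (u j) := by
  set w : ℕ → ℂ := fun m => ∑ j : Fin n, (starRingEnd ℂ) ((ee n m)^((j:ℕ)+1)) * u j with hw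
  have hconjw : ∀ m, (starRingEnd ℂ) (w m) = ∑ j : Fin n, (ee n m)^((j:ℕ)+1) * (starRingEnd ℂ) (u j) := by
    intro m
    rw [hw]
    simp only [_root_.map_sum, _root_.map_mul, Complex.conj_conj]
  have hP1 : ∑ m ∈ range n, ((Complex.normSq (w m) : ℂ)) = (n:ℂ) * ∑ j : Fin n, (Complex.normSq (u j) : ℂ) := by
    have expand : ∀ m ∈ range n, ((Complex.normSq (w m) : ℂ))
        = ∑ j : Fin n, ∑ k : Fin n, (u j * (starRingEnd ℂ) (u k)) * ((starRingEnd ℂ) ((ee n m)^((j:ℕ)+1)) * (ee n m)^((k:ℕ)+1)) := by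
      intro m _
      rw [← Complex.mul_conj (w m)]
      nth_rewrite 1 [hw]
      rw [hconjw m, Finset.sum_mul_sum]
      refine Finset.sum_congr rfl fun j _ => Finset.sum_congr rfl fun k _ => by ring
    rw [Finset.sum_congr rfl expand, Finset.sum_comm]
    have swap2 : ∀ j : Fin n, ∑ m ∈ range n, ∑ k : Fin n, (u j * (starRingEnd ℂ) (u k)) * ((starRingEnd ℂ) ((ee n m)^((j:ℕ)+1)) * (ee n m)^((k:ℕ)+1))
        = ∑ k : Fin n, (u j * (starRingEnd ℂ) (u k)) * (if j = k then (n:ℂ) else 0) := by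
      intro j
      rw [Finset.sum_comm]
      refine Finset.sum_congr rfl fun k _ => ?_
      rw [← Finset.mul_sum, ortho n hn j k]
    rw [Finset.sum_congr rfl (fun j _ => swap2 j), Finset.mul_sum]
    refine Finset.sum_congr rfl fun j _ => ?_
    simp only [mul_ite, mul_zero]
    rw [Finset.sum_ite_eq Finset.univ j (fun k => u j * (starRingEnd ℂ) (u k) * (n:ℂ))]
    simp only [Finset.mem_univ, if_pos]
    rw [Complex.mul_conj (u j)]
    ring
  have hP2 : ∑ m ∈ range n, (-(ee n m + 1)/(ee n m - 1)) * ((Complex.normSq (w m) : ℂ))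
      = (n:ℂ) * ∑ j : Fin n, ∑ k : Fin n, (tg n j k : ℂ) * ((starRingEnd ℂ) (u j) * u k) := by
    have expand2 : ∀ m ∈ range n, (-(ee n m + 1)/(ee n m - 1)) * ((Complex.normSq (w m) : ℂ))
        = ∑ j : Fin n, ∑ k : Fin n, ((starRingEnd ℂ) (u j) * u k) *
            ((-(ee n m + 1)/(ee n m - 1)) * ((ee n m)^((j:ℕ)+1) * (starRingEnd ℂ) ((ee n m)^((k:ℕ)+1)))) := by
      intro m _
      rw [← Complex.mul_conj (w m)]
      nth_rewrite 1 [hw]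
      rw [hconjw m, Finset.sum_mul_sum]
      simp only [Finset.mul_sum]
      rw [Finset.sum_comm]
      refine Finset.sum_congr rfl fun j _ => Finset.sum_congr rfl fun k _ => by ring
    rw [Finset.sum_congr rfl expand2, Finset.sum_comm]
    rw [Finset.mul_sum]
    refine Finset.sum_congr rfl fun j _ => ?_
    rw [Finset.sum_comm, Finset.mul_sum]
    refine Finset.sum_congr rfl fun k _ => ?_
    rw [← Finset.mul_sum, nT n hn j k]
    ring
  have hP1R : ∑ m ∈ range n, Complex.normSq (w m) = (n:ℝ) * ∑ j : Fin n, Complex.normSq (u j) := by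
    exact_mod_cast hP1
  set Q : ℂ := ∑ j : Fin n, ∑ k : Fin n, (tg n j k : ℂ) * ((starRingEnd ℂ) (u j) * u k) with hQ
  have hchain : (n:ℝ) * ‖Q‖ ≤ Real.cot (π/(2*n)) * ((n:ℝ) * ∑ j : Fin n, Complex.normSq (u j)) := by
    calc (n:ℝ) * ‖Q‖ = ‖(n:ℂ) * Q‖ := by
          rw [norm_mul, Complex.norm_natCast]
      _ = ‖∑ m ∈ range n, (-(ee n m + 1)/(ee n m - 1)) * ((Complex.normSq (w m) : ℂ))‖ := by
          rw [hP2]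
      _ ≤ ∑ m ∈ range n, ‖(-(ee n m + 1)/(ee n m - 1)) * ((Complex.normSq (w m) : ℂ))‖ :=
          norm_sum_le _ _
      _ = ∑ m ∈ range n, ‖-(ee n m + 1)/(ee n m - 1)‖ * Complex.normSq (w m) := by
          refine Finset.sum_congr rfl fun m _ => ?_
          rw [norm_mul, Complex.norm_real, Real.norm_eq_abs, _root_.abs_of_nonneg (Complex.normSq_nonneg _)]
      _ ≤ ∑ m ∈ range n, Real.cot (π/(2*n)) * Complex.normSq (w m) := by
          refine Finset.sum_le_sum fun m hm => ?_
          exact mul_le_mul_of_nonneg_right (lam_bound n m hn (Finset.mem_range.mp hm))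
            (Complex.normSq_nonneg _)
      _ = Real.cot (π/(2*n)) * ∑ m ∈ range n, Complex.normSq (w m) := by rw [Finset.mul_sum]
      _ = Real.cot (π/(2*n)) * ((n:ℝ) * ∑ j : Fin n, Complex.normSq (u j)) := by rw [hP1R]
  have hnpos : (0:ℝ) < n := Nat.cast_pos.mpr hn
  have := hchain
  rw [show Real.cot (π/(2*n)) * ((n:ℝ) * ∑ j : Fin n, Complex.normSq (u j))
      = (n:ℝ) * (Real.cot (π/(2*n)) * ∑ j : Fin n, Complex.normSq (u j)) by ring] at this
  exact le_of_mul_le_mul_left this hnpos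


lemma imsum (n : ℕ) (hn : 0 < n) (v : Fin n → ℂ) :
    ∑ j : Fin n, ∑ k : Fin n, |((starRingEnd ℂ) (v j) * v k).im|
      ≤ Real.cot (π/(2*n)) * ∑ j : Fin n, Complex.normSq (v j) := by
  classical
  set wv : Fin n → ℂ := fun j => if (v j).arg < 0 then -(v j) else v j with hwv
  set θv : Fin n → ℝ := fun j => if (v j).arg < 0 then (v j).arg + π else (v j).arg with hθv
  have hwθ : ∀ j, wv j = (‖v j‖ : ℂ) * Complex.exp (↑(θv j) * I) := by
    intro j
    rw [hwv, hθv]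
    by_cases h : (v j).arg < 0
    · simp only [if_pos h]
      push_cast
      rw [add_mul, Complex.exp_add, Complex.exp_pi_mul_I, mul_neg_one, mul_neg,
        Complex.norm_mul_exp_arg_mul_I]
    · simp only [if_neg h]
      exact (Complex.norm_mul_exp_arg_mul_I (v j)).symm
  have hθ0 : ∀ j, 0 ≤ θv j := by
    intro j
    rw [hθv]
    by_cases h : (v j).arg < 0
    · simp only [if_pos h]
      have := Complex.neg_pi_lt_arg (v j)
      linarith
    · simp only [if_neg h]; linarith [not_lt.mp h]
  have hθπ : ∀ j, θv j ≤ π := by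
    intro j
    rw [hθv]
    by_cases h : (v j).arg < 0
    · simp only [if_pos h]; linarith
    · simp only [if_neg h]; exact Complex.arg_le_pi (v j)
  set σ := Tuple.sort θv with hσ
  set u : Fin n → ℂ := fun k => wv (σ k) with hu
  have hmono : Monotone (θv ∘ σ) := Tuple.monotone_sort θv
  -- nonneg of im for sorted j ≤ k
  have him : ∀ j k : Fin n, j ≤ k → 0 ≤ ((starRingEnd ℂ) (u j) * u k).im := by
    intro j k hjk
    simp only [hu]
    rw [hwθ (σ j), hwθ (σ k)]
    rw [_root_.map_mul, Complex.conj_ofReal, ← Complex.exp_conj]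
    rw [show (starRingEnd ℂ) (↑(θv (σ j)) * I) = -(↑(θv (σ j)) * I) by
      rw [_root_.map_mul, Complex.conj_ofReal, Complex.conj_I]; ring]
    have hexp : Complex.exp (-(↑(θv (σ j)) * I)) * ((‖v (σ k)‖ : ℂ) * Complex.exp (↑(θv (σ k)) * I))
        = (‖v (σ k)‖ : ℂ) * Complex.exp (↑(θv (σ k) - θv (σ j)) * I) := by
      rw [mul_comm, mul_assoc, ← Complex.exp_add]
      congr 1
      push_cast
      ring
    rw [mul_assoc, hexp, ← mul_assoc, ← Complex.ofReal_mul]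
    rw [show ∀ (r : ℝ) (z : ℂ), ((r:ℂ) * z).im = r * z.im from fun r z => by
      rw [Complex.mul_im]; simp]
    rw [Complex.exp_ofReal_mul_I_im]
    have h1 : 0 ≤ θv (σ k) - θv (σ j) := by
      have := hmono hjk; simp only [Function.comp_apply] at this; linarith
    have h2 : θv (σ k) - θv (σ j) ≤ π := by
      linarith [hθ0 (σ j), hθπ (σ k)]
    have := Real.sin_nonneg_of_nonneg_of_le_pi h1 h2
    positivity
  -- antisymmetry of im
  have hanti : ∀ (a b : ℂ), ((starRingEnd ℂ) b * a).im = -((starRingEnd ℂ) a * b).im := by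
    intro a b
    simp [Complex.mul_im]
    ring
  -- step (f): reindex
  have hvw : ∀ j k : Fin n, |((starRingEnd ℂ) (v j) * v k).im| = |((starRingEnd ℂ) (wv j) * wv k).im| := by
    intro j k
    rw [hwv]
    by_cases h1 : (v j).arg < 0 <;> by_cases h2 : (v k).arg < 0 <;>
      simp [h1, h2, _root_.map_neg, Complex.neg_im, abs_neg, Complex.mul_im] <;>
      (try rw [← sub_eq_add_neg, ← sub_eq_add_neg, abs_sub_comm])
  have hreidx : ∑ j : Fin n, ∑ k : Fin n, |((starRingEnd ℂ) (v j) * v k).im|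
      = ∑ j : Fin n, ∑ k : Fin n, |((starRingEnd ℂ) (u j) * u k).im| := by
    rw [Finset.sum_congr rfl fun j _ => Finset.sum_congr rfl fun k _ => hvw j k]
    rw [← Equiv.sum_comp σ (fun j => ∑ k : Fin n, |((starRingEnd ℂ) (wv j) * wv k).im|)]
    refine Finset.sum_congr rfl fun j _ => ?_
    rw [← Equiv.sum_comp σ (fun k => |((starRingEnd ℂ) (wv (σ j)) * wv k).im|)]
  -- step (g): pairing
  have pair : ∀ j k : Fin n, |((starRingEnd ℂ) (u j) * u k).im| + |((starRingEnd ℂ) (u k) * u j).im|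
      = tg n j k * ((starRingEnd ℂ) (u j) * u k).im + tg n k j * ((starRingEnd ℂ) (u k) * u j).im := by
    intro j k
    have ha := hanti (u j) (u k)
    rcases lt_trichotomy j k with h|h|h
    · have h1 := him j k h.le
      have h2 : ((starRingEnd ℂ) (u k) * u j).im ≤ 0 := by rw [ha]; linarith
      rw [_root_.abs_of_nonneg h1, _root_.abs_of_nonpos h2]
      unfold tg
      rw [if_pos h, if_neg (asymm h), if_pos h]
      linarith [ha]
    · subst h
      have : ((starRingEnd ℂ) (u j) * u j).im = 0 := by rw [ha] at *; linarith [hanti (u j) (u j)]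
      rw [this]
      simp
    · have h1 := him k j h.le
      have h2 : ((starRingEnd ℂ) (u j) * u k).im ≤ 0 := by
        rw [hanti (u j) (u k)] at h1; linarith
      rw [_root_.abs_of_nonpos h2, _root_.abs_of_nonneg h1]
      unfold tg
      rw [if_neg (asymm h), if_pos h, if_pos h]
      linarith [ha]
  have hgoal2 : ∑ j : Fin n, ∑ k : Fin n, |((starRingEnd ℂ) (u j) * u k).im|
      = ∑ j : Fin n, ∑ k : Fin n, tg n j k * ((starRingEnd ℂ) (u j) * u k).im := by
    have S1 : ∑ j : Fin n, ∑ k : Fin n, |((starRingEnd ℂ) (u j) * u k).im|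
        = ∑ j : Fin n, ∑ k : Fin n, |((starRingEnd ℂ) (u k) * u j).im| := Finset.sum_comm
    have S2 : ∑ j : Fin n, ∑ k : Fin n, tg n j k * ((starRingEnd ℂ) (u j) * u k).im
        = ∑ j : Fin n, ∑ k : Fin n, tg n k j * ((starRingEnd ℂ) (u k) * u j).im := Finset.sum_comm
    have hsum : ∑ j : Fin n, ∑ k : Fin n, (|((starRingEnd ℂ) (u j) * u k).im| + |((starRingEnd ℂ) (u k) * u j).im|)
        = ∑ j : Fin n, ∑ k : Fin n, (tg n j k * ((starRingEnd ℂ) (u j) * u k).im + tg n k j * ((starRingEnd ℂ) (u k) * u j).im) :=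
      Finset.sum_congr rfl fun j _ => Finset.sum_congr rfl fun k _ => pair j k
    simp only [Finset.sum_add_distrib] at hsum
    rw [← S1] at hsum
    rw [← S2] at hsum
    linarith
  -- step (h): into complex abs and keyQuad
  have hsum_im : ∑ j : Fin n, ∑ k : Fin n, tg n j k * ((starRingEnd ℂ) (u j) * u k).im
      = (∑ j : Fin n, ∑ k : Fin n, (tg n j k : ℂ) * ((starRingEnd ℂ) (u j) * u k)).im := by
    rw [Complex.im_sum]
    refine Finset.sum_congr rfl fun j _ => ?_
    rw [Complex.im_sum]
    refine Finset.sum_congr rfl fun k _ => ?_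
    rw [Complex.mul_im]
    simp
  have hns : ∑ j : Fin n, Complex.normSq (u j) = ∑ j : Fin n, Complex.normSq (v j) := by
    have h1 : ∀ j, Complex.normSq (wv j) = Complex.normSq (v j) := by
      intro j
      rw [hwv]
      by_cases h : (v j).arg < 0 <;> simp [h]
    calc ∑ j : Fin n, Complex.normSq (u j) = ∑ j : Fin n, Complex.normSq (wv (σ j)) := rfl
      _ = ∑ j : Fin n, Complex.normSq (wv j) := Equiv.sum_comp σ (fun j => Complex.normSq (wv j))
      _ = ∑ j : Fin n, Complex.normSq (v j) := Finset.sum_congr rfl fun j _ => h1 j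
  calc ∑ j : Fin n, ∑ k : Fin n, |((starRingEnd ℂ) (v j) * v k).im|
      = (∑ j : Fin n, ∑ k : Fin n, (tg n j k : ℂ) * ((starRingEnd ℂ) (u j) * u k)).im := by
        rw [hreidx, hgoal2, hsum_im]
    _ ≤ |(∑ j : Fin n, ∑ k : Fin n, (tg n j k : ℂ) * ((starRingEnd ℂ) (u j) * u k)).im| := le_abs_self _
    _ ≤ ‖∑ j : Fin n, ∑ k : Fin n, (tg n j k : ℂ) * ((starRingEnd ℂ) (u j) * u k)‖ :=
        Complex.abs_im_le_norm _
    _ ≤ Real.cot (π/(2*n)) * ∑ j : Fin n, Complex.normSq (u j) := keyQuad n hn u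
    _ = Real.cot (π/(2*n)) * ∑ j : Fin n, Complex.normSq (v j) := by rw [hns]


theorem stmt_7 (n : ℕ) (hn : 0 < n)
    (S : Matrix (Fin n) (Fin n) ℂ)
    (hskew : Sᵀ = -S)
    (hentries : ∀ i j, S i j = 0 ∨ S i j = 1 ∨ S i j = -1) :
    ∀ μ ∈ spectrum ℂ S, ‖μ‖ ≤ Real.cot (π / (2 * n)) := by
  intro μ hμ
  have h1 : ¬IsUnit (algebraMap ℂ (Matrix (Fin n) (Fin n) ℂ) μ - S) := spectrum.mem_iff.mp hμ
  have hdet : (algebraMap ℂ (Matrix (Fin n) (Fin n) ℂ) μ - S).det = 0 := by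
    by_contra h
    exact h1 ((Matrix.isUnit_iff_isUnit_det _).mpr (isUnit_iff_ne_zero.mpr h))
  obtain ⟨v, hv0, hv⟩ := Matrix.exists_mulVec_eq_zero_iff.mpr hdet
  have hSv : S.mulVec v = μ • v := by
    have halg : algebraMap ℂ (Matrix (Fin n) (Fin n) ℂ) μ = μ • (1 : Matrix (Fin n) (Fin n) ℂ) :=
      Algebra.algebraMap_eq_smul_one μ
    rw [halg, Matrix.sub_mulVec, Matrix.smul_mulVec, Matrix.one_mulVec, sub_eq_zero] at hv
    exact hv.symm
  -- real entries
  have hre : ∀ j k, S j k = (((S j k).re : ℝ) : ℂ) := by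
    intro j k
    rcases hentries j k with h|h|h <;> rw [h] <;> norm_num
  have habs1 : ∀ j k, |(S j k).re| ≤ 1 := by
    intro j k
    rcases hentries j k with h|h|h <;> rw [h] <;> norm_num
  have hskew' : ∀ j k, S k j = - S j k := by
    intro j k
    have := congrFun (congrFun hskew j) k
    simpa [Matrix.transpose_apply, Matrix.neg_apply] using this
  set N : ℝ := ∑ j : Fin n, Complex.normSq (v j) with hN
  have hNpos : 0 < N := by
    rw [hN]
    have hex : ∃ j, v j ≠ 0 := by
      by_contra h
      push_neg at h
      exact hv0 (funext h)
    obtain ⟨j0, hj0⟩ := hex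
    refine Finset.sum_pos' (fun j _ => Complex.normSq_nonneg _) ⟨j0, Finset.mem_univ j0, ?_⟩
    exact Complex.normSq_pos.mpr hj0
  set Z : ℂ := ∑ j : Fin n, ∑ k : Fin n, (starRingEnd ℂ) (v j) * (S j k * v k) with hZ
  have hZval : Z = μ * (N : ℂ) := by
    rw [hZ]
    have : ∀ j : Fin n, ∑ k : Fin n, (starRingEnd ℂ) (v j) * (S j k * v k)
        = (starRingEnd ℂ) (v j) * (μ * v j) := by
      intro j
      rw [← Finset.mul_sum]
      congr 1
      have := congrFun hSv j
      rw [Matrix.mulVec, dotProduct] at this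
      rw [this]
      simp [smul_eq_mul]
    rw [Finset.sum_congr rfl fun j _ => this j]
    push_cast [hN]
    rw [Finset.mul_sum]
    refine Finset.sum_congr rfl fun j _ => ?_
    rw [Complex.normSq_eq_conj_mul_self]
    ring
  have hZre : Z.re = 0 := by
    have hconj : (starRingEnd ℂ) Z = -Z := by
      rw [hZ, _root_.map_sum]
      rw [show -(∑ j : Fin n, ∑ k : Fin n, (starRingEnd ℂ) (v j) * (S j k * v k))
          = ∑ j : Fin n, ∑ k : Fin n, -((starRingEnd ℂ) (v j) * (S j k * v k)) by
        simp [Finset.sum_neg_distrib]]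
      rw [Finset.sum_comm]
      refine Finset.sum_congr rfl fun j _ => ?_
      rw [_root_.map_sum]
      refine Finset.sum_congr rfl fun k _ => ?_
      rw [_root_.map_mul, _root_.map_mul, Complex.conj_conj]
      rw [show (starRingEnd ℂ) (S j k) = S j k by rw [hre j k]; exact Complex.conj_ofReal _]
      rw [hskew' j k]
      ring
    have := congrArg Complex.re hconj
    simp only [Complex.conj_re, Complex.neg_re] at this
    linarith
  have habsZ : ‖Z‖ = |Z.im| := by
    rw [Complex.norm_def, Complex.normSq_apply, hZre]
    rw [← Real.sqrt_sq_eq_abs]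
    ring_nf
  have hbound : ‖Z‖ ≤ Real.cot (π / (2*n)) * N := by
    rw [habsZ]
    have him : |Z.im| ≤ ∑ j : Fin n, ∑ k : Fin n, |((starRingEnd ℂ) (v j) * v k).im| := by
      rw [hZ, Complex.im_sum]
      refine le_trans (Finset.abs_sum_le_sum_abs _ _) ?_
      refine Finset.sum_le_sum fun j _ => ?_
      rw [Complex.im_sum]
      refine le_trans (Finset.abs_sum_le_sum_abs _ _) ?_
      refine Finset.sum_le_sum fun k _ => ?_
      have : ((starRingEnd ℂ) (v j) * (S j k * v k)).im = (S j k).re * ((starRingEnd ℂ) (v j) * v k).im := by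
        nth_rewrite 1 [hre j k]
        rw [show (starRingEnd ℂ) (v j) * (((S j k).re : ℂ) * v k) = ((S j k).re : ℂ) * ((starRingEnd ℂ) (v j) * v k) by ring]
        rw [Complex.mul_im]
        simp
      rw [this, abs_mul]
      calc |(S j k).re| * |((starRingEnd ℂ) (v j) * v k).im|
          ≤ 1 * |((starRingEnd ℂ) (v j) * v k).im| :=
            mul_le_mul_of_nonneg_right (habs1 j k) (abs_nonneg _)
        _ = |((starRingEnd ℂ) (v j) * v k).im| := one_mul _
    exact le_trans him (imsum n hn v)
  have : ‖μ‖ * N ≤ Real.cot (π / (2*n)) * N := by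
    have : ‖Z‖ = ‖μ‖ * N := by
      rw [hZval, norm_mul, Complex.norm_real, Real.norm_eq_abs, _root_.abs_of_nonneg hNpos.le]
    linarith [hbound, this]
  exact le_of_mul_le_mul_right this hNpos
end

section
/- Let R be a positive semidefinite Hermitian (k+1)×(k+1) matrix of the block form R = [[c, b*], [b, Q]] where Q is k×k Hermitian positive semidefinite, b is a k×1 vector, and c ≥ 0. If η_k is any upper bound on the maximum eigenvalue of Q, then the maximum eigenvalue of R satisfies λ_max(R) ≤ (c + η_k)/2 + sqrt( (c - η_k)²/4 + b*b ). -/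
open Complex Matrix
open scoped ComplexOrder

lemma conj_mul_self_re (z : ℂ) : (star z * z).re = ‖z‖ ^ 2 := by
  simp [Complex.star_def, Complex.mul_re, Complex.sq_norm,
    Complex.normSq_apply]

lemma quad_le {n : Type*} [Fintype n] [DecidableEq n] (A : Matrix n n ℂ)
    (hA : A.IsHermitian) (η : ℝ) (hη : ∀ i, hA.eigenvalues i ≤ η) (x : n → ℂ) :
    (star x ⬝ᵥ A *ᵥ x).re ≤ η * ∑ i, ‖x i‖ ^ 2 := by
  classical
  set U : Matrix n n ℂ := (hA.eigenvectorUnitary : Matrix n n ℂ) with hU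
  set y : n → ℂ := star U *ᵥ x with hy
  have hs : (star U)ᴴ = U := by simp [Matrix.star_eq_conjTranspose]
  have hUU : U * star U = 1 := (Matrix.mem_unitaryGroup_iff).mp hA.eigenvectorUnitary.2
  have h1 : star y ⬝ᵥ y = star x ⬝ᵥ x := by
    rw [hy, star_mulVec, hs, dotProduct_mulVec, vecMul_vecMul,
      ← dotProduct_mulVec, hUU, one_mulVec]
  have hysq : ∑ i, ‖y i‖ ^ 2 = ∑ i, ‖x i‖ ^ 2 := by
    have := congrArg Complex.re h1
    simp only [dotProduct, Complex.re_sum, Pi.star_apply] at this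
    calc ∑ i, ‖y i‖ ^ 2 = ∑ i, (star (y i) * y i).re :=
          Finset.sum_congr rfl fun i _ => (conj_mul_self_re _).symm
    _ = ∑ i, (star (x i) * x i).re := this
    _ = ∑ i, ‖x i‖ ^ 2 := Finset.sum_congr rfl fun i _ => conj_mul_self_re _
  have hDD : Matrix.diagonal (RCLike.ofReal ∘ hA.eigenvalues : n → ℂ)
      = Matrix.diagonal ((↑) ∘ hA.eigenvalues : n → ℂ) := rfl
  have hquad : star x ⬝ᵥ A *ᵥ x
      = star y ⬝ᵥ (Matrix.diagonal ((↑) ∘ hA.eigenvalues : n → ℂ)) *ᵥ y := by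
    conv_lhs => rw [hA.spectral_theorem, Unitary.conjStarAlgAut_apply]
    rw [← hU, hy, star_mulVec, hs, hDD]
    simp only [dotProduct_mulVec, vecMul_vecMul, Matrix.mul_assoc]
  rw [hquad]
  have hdiag : (star y ⬝ᵥ (Matrix.diagonal ((↑) ∘ hA.eigenvalues : n → ℂ)) *ᵥ y).re
      = ∑ i, hA.eigenvalues i * ‖y i‖ ^ 2 := by
    simp only [dotProduct, mulVec_diagonal, Complex.re_sum, Pi.star_apply, Function.comp_apply]
    congr 1; funext i
    rw [show star (y i) * ((hA.eigenvalues i : ℂ) * y i)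
      = (hA.eigenvalues i : ℂ) * (star (y i) * y i) by ring]
    rw [Complex.re_ofReal_mul, conj_mul_self_re]
  rw [hdiag, ← hysq, Finset.mul_sum]
  exact Finset.sum_le_sum fun i _ => mul_le_mul_of_nonneg_right (hη i) (by positivity)

lemma block_expand (k : ℕ) (c : ℝ) (b : Fin k → ℂ) (Q : Matrix (Fin k) (Fin k) ℂ)
    (w : (Fin 1 ⊕ Fin k) → ℂ) :
    (star w ⬝ᵥ (Matrix.fromBlocks
      (Matrix.of fun _ _ : Fin 1 => (c : ℂ))
      (Matrix.of fun (_ : Fin 1) j => star (b j))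
      (Matrix.of fun i (_ : Fin 1) => b i) Q) *ᵥ w)
    = (c : ℂ) * (star (w (Sum.inl 0)) * w (Sum.inl 0))
      + star (w (Sum.inl 0)) * (∑ j, star (b j) * w (Sum.inr j))
      + star (star (w (Sum.inl 0)) * (∑ j, star (b j) * w (Sum.inr j)))
      + star (fun j => w (Sum.inr j)) ⬝ᵥ Q *ᵥ (fun j => w (Sum.inr j)) := by
  simp only [dotProduct, mulVec, Fintype.sum_sum_type, Fin.sum_univ_one, dotProduct,
    Matrix.fromBlocks_apply₁₁, Matrix.fromBlocks_apply₁₂, Matrix.fromBlocks_apply₂₁,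
    Matrix.fromBlocks_apply₂₂, Matrix.of_apply, Pi.star_apply, star_mul', star_sum, star_star,
    mul_add, add_mul, Finset.mul_sum, Finset.sum_mul, Finset.sum_add_distrib]
  ring_nf
  rw [Finset.sum_congr rfl (fun j (_ : j ∈ Finset.univ) =>
    (by ring : w (Sum.inl 0) * b j * star (w (Sum.inr j))
      = w (Sum.inl 0) * star (w (Sum.inr j)) * b j))]
  ring

lemma real_final (a T B c η S : ℝ) (ha : 0 ≤ a) (hT : 0 ≤ T) (hB : 0 ≤ B)
    (h1 : a^2 + T^2 = 1) (hS : 0 ≤ S) (hS2 : S^2 = (c-η)^2/4 + B^2) :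
    c*a^2 + 2*(a*(B*T)) + η*T^2 ≤ (c+η)/2 + S := by
  have key : S^2 - ((c-η)/2*(a^2-T^2) + 2*a*T*B)^2
      = ((c-η)*a*T - B*(a^2-T^2))^2 := by
    linear_combination hS2 - ((c-η)^2/4 + B^2)*(1 + a^2 + T^2)*h1
  have h2 : ((c-η)/2*(a^2-T^2) + 2*a*T*B)^2 ≤ S^2 := by nlinarith [key]
  have h3 : (c-η)/2*(a^2-T^2) + 2*a*T*B ≤ S := by nlinarith [h2, hS]
  have heq : c*a^2 + η*T^2 = (c+η)/2 + (c-η)/2*(a^2-T^2) := by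
    linear_combination (c+η)/2*h1
  linarith [h3, heq]

set_option maxHeartbeats 2000000 in
theorem stmt_8 (k : ℕ) (c : ℝ) (hc : 0 ≤ c) (b : Fin k → ℂ)
    (Q : Matrix (Fin k) (Fin k) ℂ) (hQ : Q.PosSemidef)
    (R : Matrix (Fin 1 ⊕ Fin k) (Fin 1 ⊕ Fin k) ℂ)
    (hR : R = Matrix.fromBlocks
      (Matrix.of fun _ _ : Fin 1 => (c : ℂ))
      (Matrix.of fun (_ : Fin 1) j => star (b j))
      (Matrix.of fun i (_ : Fin 1) => b i) Q)
    (hRpsd : R.PosSemidef)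
    (η : ℝ) (hη : ∀ i, hQ.isHermitian.eigenvalues i ≤ η) :
    ∀ i, hRpsd.isHermitian.eigenvalues i ≤
      (c + η) / 2 + Real.sqrt ((c - η) ^ 2 / 4 + ∑ j, ‖b j‖ ^ 2) := by
  intro i
  have hH := hRpsd.isHermitian
  obtain ⟨w, heig, hwsum⟩ : ∃ w : (Fin 1 ⊕ Fin k) → ℂ,
      hRpsd.isHermitian.eigenvalues i = (star w ⬝ᵥ R *ᵥ w).re ∧
      ∑ s, ‖w s‖ ^ 2 = 1 := by
    refine ⟨⇑(hH.eigenvectorBasis i), by simpa using hH.eigenvalues_eq i, ?_⟩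
    have hnorm : ‖hH.eigenvectorBasis i‖ = 1 := hH.eigenvectorBasis.orthonormal.1 i
    have h := EuclideanSpace.norm_eq (hH.eigenvectorBasis i)
    rw [hnorm] at h
    exact Real.sqrt_eq_one.mp h.symm
  rw [Fintype.sum_sum_type, Fin.sum_univ_one] at hwsum
  -- expansion
  have hRv := block_expand k c b Q w
  rw [← hR] at hRv
  rw [hRv] at heig
  set α : ℂ := w (Sum.inl 0) with hα
  set x : Fin k → ℂ := fun j => w (Sum.inr j) with hx
  -- real part computation
  have hre : hRpsd.isHermitian.eigenvalues i
      = c * ‖α‖ ^ 2 + 2 * (star α * ∑ j, star (b j) * w (Sum.inr j)).re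
        + (star x ⬝ᵥ Q *ᵥ x).re := by
    rw [heig]
    simp only [Complex.add_re, Complex.re_ofReal_mul, conj_mul_self_re]
    rw [show (star (star α * ∑ j, star (b j) * w (Sum.inr j)) : ℂ)
        = (starRingEnd ℂ) (star α * ∑ j, star (b j) * w (Sum.inr j)) from rfl,
      Complex.conj_re]
    ring
  -- Cauchy-Schwarz
  set B : ℝ := Real.sqrt (∑ j, ‖b j‖ ^ 2) with hB
  set T : ℝ := Real.sqrt (∑ j, ‖w (Sum.inr j)‖ ^ 2) with hT
  have hCS : ‖∑ j, star (b j) * w (Sum.inr j)‖ ≤ B * T := by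
    have h := norm_inner_le_norm (𝕜 := ℂ)
      ((WithLp.equiv 2 (Fin k → ℂ)).symm b) ((WithLp.equiv 2 (Fin k → ℂ)).symm x)
    simpa [EuclideanSpace.norm_eq, PiLp.inner_apply, RCLike.inner_apply, Complex.star_def,
      hB, hT, hx, mul_comm] using h
  have hcross : (star α * ∑ j, star (b j) * w (Sum.inr j)).re ≤ ‖α‖ * (B * T) := by
    refine le_trans (Complex.re_le_norm _) ?_
    rw [norm_mul]
    have h1 : ‖star α‖ = ‖α‖ := by simp [Complex.norm_def]
    rw [h1]
    exact mul_le_mul_of_nonneg_left (by simpa using hCS) (norm_nonneg α)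
  -- Q quadratic form bound
  have hquadQ : (star x ⬝ᵥ Q *ᵥ x).re ≤ η * ∑ j, ‖w (Sum.inr j)‖ ^ 2 := by
    have := quad_le Q hQ.isHermitian η hη x
    simpa [hx] using this
  -- combine
  have hBnn : (0:ℝ) ≤ ∑ j, ‖b j‖ ^ 2 := Finset.sum_nonneg fun j _ => by positivity
  have hTnn : (0:ℝ) ≤ ∑ j, ‖w (Sum.inr j)‖ ^ 2 := Finset.sum_nonneg fun j _ => by positivity
  have hB2 : B ^ 2 = ∑ j, ‖b j‖ ^ 2 := Real.sq_sqrt hBnn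
  have hT2 : T ^ 2 = ∑ j, ‖w (Sum.inr j)‖ ^ 2 := Real.sq_sqrt hTnn
  have hB0 : (0:ℝ) ≤ B := Real.sqrt_nonneg _
  have hT0 : (0:ℝ) ≤ T := Real.sqrt_nonneg _
  clear_value B T
  have hS2 : (Real.sqrt ((c - η) ^ 2 / 4 + ∑ j, ‖b j‖ ^ 2)) ^ 2 = (c - η) ^ 2 / 4 + B ^ 2 := by
    rw [hB2]
    exact Real.sq_sqrt (by positivity)
  have hfin := real_final ‖α‖ T B c η
    (Real.sqrt ((c - η) ^ 2 / 4 + ∑ j, ‖b j‖ ^ 2)) (norm_nonneg α)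
    hT0 hB0
    (by rw [hT2]; exact hwsum) (Real.sqrt_nonneg _)
    hS2
  calc hRpsd.isHermitian.eigenvalues i
      = c * ‖α‖ ^ 2 + 2 * (star α * ∑ j, star (b j) * w (Sum.inr j)).re
        + (star x ⬝ᵥ Q *ᵥ x).re := hre
    _ ≤ c * ‖α‖ ^ 2 + 2 * (‖α‖ * (B * T)) + η * T ^ 2 := by
        rw [hT2]; linarith [hcross, hquadQ]
    _ ≤ (c + η) / 2 + Real.sqrt ((c - η) ^ 2 / 4 + ∑ j, ‖b j‖ ^ 2) := hfin
end

section
/- Let R be a positive semidefinite Hermitian (k+1)×(k+1) matrix of the block form R = [[c, b*], [b, Q]] where Q is k×k Hermitian positive semidefinite, b is a k×1 vector, and c ≥ 0. If η_1 is any lower bound on the minimum eigenvalue of Q, then the minimum eigenvalue of R satisfies λ_min(R) ≥ (c + η_1)/2 - sqrt( (c - η_1)²/4 + b*b ). -/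
open Complex Matrix
open scoped ComplexOrder

lemma aux_scalar (c η β p q : ℝ) (hβ : 0 ≤ β) (hp : 0 ≤ p) (hq : 0 ≤ q)
    (hpq : p ^ 2 + q ^ 2 = 1) :
    (c + η) / 2 - Real.sqrt ((c - η) ^ 2 / 4 + β ^ 2) ≤ c * p ^ 2 - 2 * (β * q) * p + η * q ^ 2 := by
  have hs0 : 0 ≤ Real.sqrt ((c - η) ^ 2 / 4 + β ^ 2) := Real.sqrt_nonneg _
  have hs2 : Real.sqrt ((c - η) ^ 2 / 4 + β ^ 2) ^ 2 = (c - η) ^ 2 / 4 + β ^ 2 :=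
    Real.sq_sqrt (by positivity)
  set s := Real.sqrt ((c - η) ^ 2 / 4 + β ^ 2) with hs
  have key : c * p ^ 2 - 2 * (β * q) * p + η * q ^ 2 - ((c + η) / 2 - s)
      = ((c - η) / 2 + s) * p ^ 2 + ((η - c) / 2 + s) * q ^ 2 - 2 * β * p * q := by
    linear_combination ((c + η) / 2 - s) * hpq
  have hAB : ((c - η) / 2 + s) * ((η - c) / 2 + s) = β ^ 2 := by linear_combination hs2
  rcases eq_or_lt_of_le hβ with h0 | h0
  · obtain rfl := h0.symm
    have hA : 0 ≤ (c - η) / 2 + s := by nlinarith [sq_nonneg ((c - η) / 2 - s)]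
    have hB : 0 ≤ (η - c) / 2 + s := by nlinarith [sq_nonneg ((η - c) / 2 - s)]
    nlinarith [mul_nonneg hA (sq_nonneg p), mul_nonneg hB (sq_nonneg q), key]
  · have hApos : 0 < (c - η) / 2 + s := by nlinarith [sq_nonneg ((c - η) / 2 - s)]
    have hABq : ((c - η) / 2 + s) * ((η - c) / 2 + s) * q ^ 2 = β ^ 2 * q ^ 2 := by
      rw [hAB]
    nlinarith [sq_nonneg (((c - η) / 2 + s) * p - β * q), hApos, hABq, key]


lemma aux_quad {k : ℕ} (A : Matrix (Fin k) (Fin k) ℂ) (hA : A.IsHermitian) (η : ℝ)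
    (hη : ∀ i, η ≤ hA.eigenvalues i) (y : Fin k → ℂ) :
    η * ∑ j, ‖y j‖ ^ 2 ≤ (dotProduct (star y) (A *ᵥ y)).re := by
  have hpsd : (A - (η : ℂ) • 1).PosSemidef := by
    have h1 : A - (η : ℂ) • (1 : Matrix (Fin k) (Fin k) ℂ)
        = hA.eigenvectorUnitary.1
          * Matrix.diagonal (fun i => ((hA.eigenvalues i - η : ℝ) : ℂ))
          * (hA.eigenvectorUnitary.1)ᴴ := by
      have hU : hA.eigenvectorUnitary.1 * star hA.eigenvectorUnitary.1 = 1 :=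
        Matrix.mem_unitaryGroup_iff.mp hA.eigenvectorUnitary.2
      have h2 : (η : ℂ) • (1 : Matrix (Fin k) (Fin k) ℂ)
          = hA.eigenvectorUnitary.1 * ((η : ℂ) • 1) * star hA.eigenvectorUnitary.1 := by
        rw [Matrix.mul_smul, Matrix.smul_mul, mul_one, hU]
      conv_lhs => rw [hA.spectral_theorem, Unitary.conjStarAlgAut_apply, h2]
      rw [← Matrix.sub_mul, ← Matrix.mul_sub, Matrix.smul_one_eq_diagonal,
        Matrix.diagonal_sub]
      simp [Matrix.star_eq_conjTranspose, Function.comp]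
    rw [h1]
    exact (Matrix.posSemidef_diagonal_iff.mpr fun i => by
      rw [Complex.zero_le_real]
      linarith [hη i]).mul_mul_conjTranspose_same _
  have h0 := hpsd.re_dotProduct_nonneg y
  have hexp : (star y) ⬝ᵥ ((A - (η : ℂ) • 1) *ᵥ y)
      = (star y) ⬝ᵥ (A *ᵥ y) - (η : ℂ) * ((star y) ⬝ᵥ y) := by
    rw [Matrix.sub_mulVec, dotProduct_sub, Matrix.smul_mulVec,
      Matrix.one_mulVec, dotProduct_smul, smul_eq_mul]
  have hyy : (star y) ⬝ᵥ y = ((∑ j, ‖y j‖ ^ 2 : ℝ) : ℂ) := by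
    simp [dotProduct, Complex.ofReal_sum]
    congr 1
    funext j
    rw [← Complex.normSq_eq_conj_mul_self]
    norm_cast
    rw [← Complex.sq_norm]
  rw [hexp, hyy] at h0
  simp only [RCLike.re_to_complex, Complex.sub_re, ← Complex.ofReal_mul, Complex.ofReal_re] at h0
  linarith

theorem stmt_9 (k : ℕ) (c : ℝ) (hc : 0 ≤ c) (b : Fin k → ℂ)
    (Q : Matrix (Fin k) (Fin k) ℂ) (hQ : Q.PosSemidef)
    (R : Matrix (Fin 1 ⊕ Fin k) (Fin 1 ⊕ Fin k) ℂ)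
    (hR : R = Matrix.fromBlocks
      (Matrix.of fun _ _ : Fin 1 => (c : ℂ))
      (Matrix.of fun (_ : Fin 1) j => star (b j))
      (Matrix.of fun i (_ : Fin 1) => b i) Q)
    (hRpsd : R.PosSemidef)
    (η : ℝ) (hη : ∀ i, η ≤ hQ.isHermitian.eigenvalues i) :
    ∀ i, (c + η) / 2 - Real.sqrt ((c - η) ^ 2 / 4 + ∑ j, ‖b j‖ ^ 2) ≤
      hRpsd.isHermitian.eigenvalues i := by
  intro i
  set v : (Fin 1 ⊕ Fin k) → ℂ := ⇑(hRpsd.isHermitian.eigenvectorBasis i) with hv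
  have hlam := hRpsd.isHermitian.eigenvalues_eq i
  set x : ℂ := v (Sum.inl 0) with hx
  set y : Fin k → ℂ := fun j => v (Sum.inr j) with hy
  set t : ℂ := (star b) ⬝ᵥ y with hts
  -- norm one
  have hvnorm : ‖x‖ ^ 2 + ∑ j, ‖y j‖ ^ 2 = 1 := by
    have h1 : ‖(hRpsd.isHermitian.eigenvectorBasis i : EuclideanSpace ℂ (Fin 1 ⊕ Fin k))‖ = 1 :=
      hRpsd.isHermitian.eigenvectorBasis.orthonormal.1 i
    have h2 := congrArg (· ^ 2) h1
    rw [EuclideanSpace.norm_eq] at h2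
    simp only [one_pow] at h2
    rw [Real.sq_sqrt (Finset.sum_nonneg fun j _ => sq_nonneg _)] at h2
    rw [← h2, Fintype.sum_sum_type, Fin.sum_univ_one]
  -- split the quadratic form
  have hsplit : (star v) ⬝ᵥ (R *ᵥ v)
      = (c : ℂ) * ((starRingEnd ℂ) x * x)
        + ((starRingEnd ℂ) x * t + (starRingEnd ℂ) ((starRingEnd ℂ) x * t))
        + (star y) ⬝ᵥ (Q *ᵥ y) := by
    rw [hR, Matrix.fromBlocks_mulVec]
    simp only [dotProduct, Fintype.sum_sum_type, Fin.sum_univ_one, Sum.elim_inl,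
      Sum.elim_inr, Pi.add_apply, Pi.star_apply, Matrix.mulVec, dotProduct,
      Matrix.of_apply, Function.comp, Complex.star_def, _root_.map_mul, map_sum,
      RingHomCompTriple.comp_apply]
    have h1 : (starRingEnd ℂ) t = ∑ j, b j * (starRingEnd ℂ) (y j) := by
      rw [hts]
      simp only [dotProduct, Pi.star_apply, Complex.star_def, map_sum, _root_.map_mul,
        Complex.conj_conj]
    have h2 : t = ∑ j, (starRingEnd ℂ) (b j) * y j := by
      rw [hts]
      simp only [dotProduct, Pi.star_apply, Complex.star_def]
    rw [h1, h2]
    simp only [RingHom.id_apply, mul_add, Finset.mul_sum, Finset.sum_add_distrib]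
    simp only [hx, hy]
    rw [show (∑ j, v (Sum.inl 0) * (b j * (starRingEnd ℂ) (v (Sum.inr j))))
        = ∑ j, (starRingEnd ℂ) (v (Sum.inr j)) * (b j * v (Sum.inl 0)) from
      Finset.sum_congr rfl fun j _ => by ring]
    ring
  -- real parts
  have hre : hRpsd.isHermitian.eigenvalues i
      = c * ‖x‖ ^ 2 + 2 * ((starRingEnd ℂ) x * t).re + ((star y) ⬝ᵥ (Q *ᵥ y)).re := by
    rw [hlam, hsplit]
    simp only [RCLike.re_to_complex, Complex.add_re, Complex.conj_re]
    have : (starRingEnd ℂ) x * x = ((‖x‖ ^ 2 : ℝ) : ℂ) := by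
      rw [← Complex.normSq_eq_conj_mul_self]
      norm_cast
      rw [← Complex.sq_norm]
    rw [this, ← Complex.ofReal_mul]
    simp only [Complex.ofReal_re]
    ring
  -- bound on the quadratic form of Q
  have hQb : η * ∑ j, ‖y j‖ ^ 2 ≤ ((star y) ⬝ᵥ (Q *ᵥ y)).re := aux_quad Q hQ.isHermitian η hη y
  -- Cauchy-Schwarz bound on t
  have ht : ‖t‖ ≤ Real.sqrt (∑ j, ‖b j‖ ^ 2) * Real.sqrt (∑ j, ‖y j‖ ^ 2) := by
    have h1 := norm_inner_le_norm (𝕜 := ℂ) ((WithLp.equiv 2 (Fin k → ℂ)).symm b)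
      ((WithLp.equiv 2 (Fin k → ℂ)).symm y)
    erw [EuclideanSpace.inner_toLp_toLp, dotProduct_comm] at h1
    simpa [EuclideanSpace.norm_eq] using h1
  have hre_bound : -(‖x‖ * ‖t‖) ≤ ((starRingEnd ℂ) x * t).re := by
    have h1 : |((starRingEnd ℂ) x * t).re| ≤ ‖(starRingEnd ℂ) x * t‖ := Complex.abs_re_le_norm _
    have h2 : ‖(starRingEnd ℂ) x * t‖ = ‖x‖ * ‖t‖ := by
      rw [norm_mul, RCLike.norm_conj]
    rw [h2] at h1
    linarith [neg_abs_le (((starRingEnd ℂ) x * t).re)]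
  -- scalar inequality
  set p : ℝ := ‖x‖ with hp
  set q : ℝ := Real.sqrt (∑ j, ‖y j‖ ^ 2) with hq
  set β : ℝ := Real.sqrt (∑ j, ‖b j‖ ^ 2) with hβ
  have hq2 : q ^ 2 = ∑ j, ‖y j‖ ^ 2 :=
    Real.sq_sqrt (Finset.sum_nonneg fun j _ => sq_nonneg _)
  have hβ2 : β ^ 2 = ∑ j, ‖b j‖ ^ 2 :=
    Real.sq_sqrt (Finset.sum_nonneg fun j _ => sq_nonneg _)
  have hpq : p ^ 2 + q ^ 2 = 1 := by rw [hq2]; exact hvnorm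
  have hscalar := aux_scalar c η β p q (Real.sqrt_nonneg _) (norm_nonneg _)
    (Real.sqrt_nonneg _) hpq
  rw [← hβ2]
  have hmul : p * ‖t‖ ≤ p * (β * q) := by
    apply mul_le_mul_of_nonneg_left ht (norm_nonneg _)
  rw [hre]
  rw [← hq2] at hQb
  nlinarith [hre_bound, hmul, hQb, hscalar]
end

section
/- Let p ≥ 7 be a prime with p ≡ 3 (mod 4), and let Φ be the Paley measurement matrix of Definition (Paley tight frame). Then for every k with 3 ≤ k ≤ p, the restricted isometry constant of order k satisfies δ_k ≤ (k - 1 - 1/(c(k-1)))/√p, where c = 1/(2(2-√3)). -/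
open Complex Matrix
open scoped Classical

/-- The Paley measurement matrix: rows indexed by the quadratic residues
(including 0) of `ZMod p`, columns by `ZMod p`. -/
noncomputable def Paley (p : ℕ) : Matrix {m : ZMod p // IsSquare m} (ZMod p) ℂ :=
  Matrix.of fun m n =>
    (if (m : ZMod p) = 0 then (Real.sqrt (1 / p) : ℂ) else (Real.sqrt (2 / p) : ℂ)) *
      Complex.exp (2 * Real.pi * I * (((m : ZMod p).val * n.val : ℕ) : ℂ) / p)

namespace PaleyRIP

noncomputable def qchar (p : ℕ) [NeZero p] [Fact p.Prime] : MulChar (ZMod p) ℂ :=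
  (quadraticChar (ZMod p)).ringHomComp (Int.castRingHom ℂ)

lemma exp_bridge (p : ℕ) [NeZero p] (t : ℕ) :
    Complex.exp (2 * Real.pi * I * (t : ℂ) / p) = ZMod.stdAddChar ((t : ZMod p)) := by
  have h := ZMod.stdAddChar_coe (N := p) (t : ℤ)
  push_cast at h ⊢
  rw [h]

lemma conj_stdAddChar (p : ℕ) [NeZero p] (a : ZMod p) :
    (starRingEnd ℂ) (ZMod.stdAddChar a) = ZMod.stdAddChar (-a) := by
  have h1 := ZMod.stdAddChar_coe (N := p) (a.val : ℤ)
  have h2 := ZMod.stdAddChar_coe (N := p) (-(a.val : ℤ))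
  rw [show a = ((a.val : ℤ) : ZMod p) by push_cast; simp [ZMod.natCast_val]]
  rw [h1, ← Int.cast_neg, h2, ← Complex.exp_conj]
  push_cast
  congr 1
  simp only [map_div₀, _root_.map_mul, Complex.conj_I, Complex.conj_natCast, map_ofNat,
    Complex.conj_ofReal]
  ring

lemma paley_apply (p : ℕ) [NeZero p] (m : {m : ZMod p // IsSquare m}) (n : ZMod p) :
    Paley p m n = (if (m : ZMod p) = 0 then (Real.sqrt (1/p) : ℂ) else (Real.sqrt (2/p) : ℂ))
      * ZMod.stdAddChar ((m : ZMod p) * n) := by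
  simp only [Paley, Matrix.of_apply]
  congr 1
  rw [exp_bridge]
  congr 1
  push_cast [ZMod.natCast_val, ZMod.cast_id]
  ring

end PaleyRIP

namespace PaleyRIP

lemma qchar_apply (p : ℕ) [NeZero p] [Fact p.Prime] (a : ZMod p) :
    qchar p a = ((quadraticChar (ZMod p) a : ℤ) : ℂ) := rfl

lemma qchar_ne_one (p : ℕ) [NeZero p] [Fact p.Prime] (hp2 : p ≠ 2) : qchar p ≠ 1 := by
  have h2 : ringChar (ZMod p) ≠ 2 := by
    rw [ZMod.ringChar_zmod_n]; exact hp2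
  exact (MulChar.ringHomComp_ne_one_iff (RingHom.injective_int _)).mpr (quadraticChar_ne_one h2)

lemma paley_gram (p : ℕ) [NeZero p] [Fact p.Prime] (hp2 : p ≠ 2) (n n' : ZMod p) :
    ∑ m : {m : ZMod p // IsSquare m}, (starRingEnd ℂ) (Paley p m n) * Paley p m n' =
      (if n = n' then 1 else 0) +
        (gaussSum (qchar p) ZMod.stdAddChar / p) * qchar p (n' - n) := by
  set ψ : AddChar (ZMod p) ℂ := ZMod.stdAddChar with hψdef
  set χ := qchar p with hχdef
  set d := n' - n with hd
  have hp0 : (p : ℂ) ≠ 0 := Nat.cast_ne_zero.mpr (NeZero.ne p)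
  have hp0' : (0:ℝ) < p := Nat.cast_pos.mpr (Nat.pos_of_ne_zero (NeZero.ne p))
  -- step 1: entry product
  have hentry : ∀ m : {m : ZMod p // IsSquare m},
      (starRingEnd ℂ) (Paley p m n) * Paley p m n' =
        (if (m : ZMod p) = 0 then (1:ℂ)/p else 2/p) * ψ ((m : ZMod p) * d) := by
    intro m
    rw [paley_apply, paley_apply, _root_.map_mul, apply_ite (starRingEnd ℂ),
      Complex.conj_ofReal, Complex.conj_ofReal, conj_stdAddChar]
    have hmul : ψ (-((m:ZMod p) * n)) * ψ ((m:ZMod p) * n') = ψ ((m:ZMod p) * d) := by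
      rw [← AddChar.map_add_eq_mul]
      congr 1
      rw [hd]; ring
    have hsq : ((if (m : ZMod p) = 0 then (Real.sqrt (1/p) : ℂ) else (Real.sqrt (2/p) : ℂ)) *
        (if (m : ZMod p) = 0 then (Real.sqrt (1/p) : ℂ) else (Real.sqrt (2/p) : ℂ)))
        = (if (m : ZMod p) = 0 then (1:ℂ)/p else 2/p) := by
      split_ifs
      · rw [← Complex.ofReal_mul, Real.mul_self_sqrt (by positivity)]; push_cast; ring
      · rw [← Complex.ofReal_mul, Real.mul_self_sqrt (by positivity)]; push_cast; ring
    calc (if (m : ZMod p) = 0 then (Real.sqrt (1/p) : ℂ) else (Real.sqrt (2/p) : ℂ)) *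
          ψ (-((m:ZMod p) * n)) *
          ((if (m : ZMod p) = 0 then (Real.sqrt (1/p) : ℂ) else (Real.sqrt (2/p) : ℂ)) *
          ψ ((m:ZMod p) * n'))
        = ((if (m : ZMod p) = 0 then (Real.sqrt (1/p) : ℂ) else (Real.sqrt (2/p) : ℂ)) *
          (if (m : ZMod p) = 0 then (Real.sqrt (1/p) : ℂ) else (Real.sqrt (2/p) : ℂ))) *
          (ψ (-((m:ZMod p) * n)) * ψ ((m:ZMod p) * n')) := by ring
      _ = _ := by rw [hsq, hmul]
  rw [Finset.sum_congr rfl (fun m _ => hentry m)]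
  -- step 2: subtype sum to indicator sum
  have hsub : ∑ m : {m : ZMod p // IsSquare m},
      (if (m : ZMod p) = 0 then (1:ℂ)/p else 2/p) * ψ ((m : ZMod p) * d)
      = ∑ m : ZMod p, if IsSquare m then (if m = 0 then (1:ℂ)/p else 2/p) * ψ (m * d) else 0 := by
    rw [← Finset.sum_filter]
    exact (Finset.sum_subtype _ (by simp) fun m => (if m = 0 then (1:ℂ)/p else 2/p) * ψ (m * d)).symm
  rw [hsub]
  -- step 3: pointwise identity with character
  have hpt : ∀ m : ZMod p,
      (if IsSquare m then (if m = 0 then (1:ℂ)/p else 2/p) * ψ (m * d) else 0)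
        = ((1 + χ m)/p) * ψ (m * d) := by
    intro m
    by_cases hm0 : m = 0
    · subst hm0
      rw [if_pos ⟨0, (mul_zero 0).symm⟩, if_pos rfl, hχdef, qchar_apply, quadraticChar_zero]
      norm_num
    by_cases hsq : IsSquare m
    · rw [if_pos hsq, if_neg hm0, hχdef, qchar_apply,
        (quadraticChar_one_iff_isSquare hm0).mpr hsq]
      norm_num
    · rw [if_neg hsq, hχdef, qchar_apply, quadraticChar_neg_one_iff_not_isSquare.mpr hsq]
      norm_num
  rw [Finset.sum_congr rfl (fun m _ => hpt m)]
  -- step 4: split the sum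
  have hsplit : ∑ m : ZMod p, ((1 + χ m)/p) * ψ (m * d)
      = (1/p) * ((∑ m : ZMod p, ψ (m * d)) + ∑ m : ZMod p, χ m * ψ (m * d)) := by
    have hpw : ∀ m : ZMod p, ((1 + χ m)/p) * ψ (m * d)
        = (1/p) * (ψ (m * d) + χ m * ψ (m * d)) := fun m => by ring
    simp_rw [hpw]
    rw [← Finset.mul_sum, Finset.sum_add_distrib]
  rw [hsplit]
  -- step 5: evaluate
  have hψprim := ZMod.isPrimitive_stdAddChar p
  rw [AddChar.sum_mulShift d hψprim]
  by_cases hd0 : d = 0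
  · have hnn : n = n' := (sub_eq_zero.mp hd0).symm
    have hχ0 : χ d = 0 := by
      rw [hd0, hχdef, qchar_apply, quadraticChar_zero]; norm_num
    have hsum0 : ∑ m : ZMod p, χ m * ψ (m * d) = 0 := by
      have : ∀ m : ZMod p, χ m * ψ (m * d) = χ m := by
        intro m; rw [hd0, mul_zero, AddChar.map_zero_eq_one, mul_one]
      simp_rw [this]
      exact MulChar.sum_eq_zero_of_ne_one (qchar_ne_one p hp2)
    rw [if_pos hd0, hsum0, hχ0, if_pos hnn, ZMod.card p]
    field_simp
    simp
  · have hne : ¬ n = n' := fun h => hd0 (by rw [hd, h, sub_self])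
    have hχsq : χ d * χ d = 1 := by
      rw [hχdef, qchar_apply, ← Int.cast_mul, ← sq, quadraticChar_sq_one hd0]
      norm_num
    have hgs : ∑ m : ZMod p, χ m * ψ (m * d) = χ d * gaussSum χ ψ := by
      have hu : IsUnit d := Ne.isUnit hd0
      have h1 := gaussSum_mulShift χ ψ hu.unit
      have h2 : gaussSum χ (AddChar.mulShift ψ hu.unit) = ∑ m : ZMod p, χ m * ψ (m * d) := by
        unfold gaussSum
        refine Finset.sum_congr rfl fun m _ => ?_
        rw [AddChar.mulShift_apply, IsUnit.unit_spec, mul_comm d m]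
      rw [h2] at h1
      calc ∑ m : ZMod p, χ m * ψ (m * d)
          = (χ d * χ d) * (∑ m : ZMod p, χ m * ψ (m * d)) := by rw [hχsq, one_mul]
        _ = χ d * (χ ↑hu.unit * ∑ m : ZMod p, χ m * ψ (m * d)) := by
            rw [IsUnit.unit_spec]; ring
        _ = χ d * gaussSum χ ψ := by rw [h1]
    rw [if_neg hd0, hgs, if_neg hne]
    push_cast
    ring

end PaleyRIP

namespace PaleyRIP

lemma abs_gaussSum (p : ℕ) [NeZero p] [Fact p.Prime] (hp2 : p ≠ 2) :
    ‖gaussSum (qchar p) ZMod.stdAddChar‖ = Real.sqrt p := by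
  have hquad : (qchar p).IsQuadratic :=
    (quadraticChar_isQuadratic (ZMod p)).comp (Int.castRingHom ℂ)
  have hsq := gaussSum_sq (qchar_ne_one p hp2) hquad (ZMod.isPrimitive_stdAddChar p)
  have habs1 : ‖qchar p (-1)‖ = 1 := by
    rcases quadraticChar_dichotomy (F := ZMod p) (neg_ne_zero.mpr one_ne_zero) with h | h <;>
      rw [qchar_apply, h] <;> simp
  have h2 : ‖gaussSum (qchar p) ZMod.stdAddChar‖ ^ 2 = p := by
    rw [← norm_pow, hsq, norm_mul, habs1, one_mul, ZMod.card, Complex.norm_natCast]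
  rw [← h2, Real.sqrt_sq (norm_nonneg _)]

lemma chi_neg (p : ℕ) [NeZero p] [Fact p.Prime] (hp3 : p % 4 = 3) (a : ZMod p) :
    quadraticChar (ZMod p) (-a) = - quadraticChar (ZMod p) a := by
  have h2 : ringChar (ZMod p) ≠ 2 := by rw [ZMod.ringChar_zmod_n]; omega
  rw [show -a = -1 * a by ring, _root_.map_mul, quadraticChar_neg_one h2, ZMod.card,
    ZMod.χ₄_nat_eq_if_mod_four]
  have h1 : p % 2 = 1 := by omega
  rw [if_neg (by omega), if_neg (by omega)]
  ring

lemma quad_form (p : ℕ) [NeZero p] [Fact p.Prime] (hp2 : p ≠ 2) (x : ZMod p → ℂ) :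
    ((∑ m : {m : ZMod p // IsSquare m}, ‖(Paley p *ᵥ x) m‖^2 : ℝ) : ℂ)
      = ((∑ i, ‖x i‖^2 : ℝ) : ℂ) + (gaussSum (qchar p) ZMod.stdAddChar / p) *
          ∑ n : ZMod p, ∑ n' : ZMod p, ((starRingEnd ℂ) (x n) * x n') * qchar p (n' - n) := by
  set χ := qchar p
  set g := gaussSum χ ZMod.stdAddChar with hg
  have hconj : ∀ z : ℂ, (‖z‖ : ℂ)^2 = (starRingEnd ℂ) z * z := by
    intro z
    rw [mul_comm, Complex.mul_conj]
    norm_cast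
    rw [Complex.normSq_eq_norm_sq]
  calc ((∑ m : {m : ZMod p // IsSquare m}, ‖(Paley p *ᵥ x) m‖^2 : ℝ) : ℂ)
      = ∑ m : {m : ZMod p // IsSquare m},
          (starRingEnd ℂ) ((Paley p *ᵥ x) m) * ((Paley p *ᵥ x) m) := by
        push_cast
        exact Finset.sum_congr rfl fun m _ => hconj _
    _ = ∑ m : {m : ZMod p // IsSquare m}, ∑ n : ZMod p, ∑ n' : ZMod p,
          ((starRingEnd ℂ) (x n) * x n') * ((starRingEnd ℂ) (Paley p m n) * Paley p m n') := by
        refine Finset.sum_congr rfl fun m _ => ?_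
        have hmv : (Paley p *ᵥ x) m = ∑ n : ZMod p, Paley p m n * x n := rfl
        rw [hmv, map_sum, Finset.sum_mul_sum]
        exact Finset.sum_congr rfl fun n _ => Finset.sum_congr rfl fun n' _ => by
          rw [_root_.map_mul]; ring
    _ = ∑ n : ZMod p, ∑ n' : ZMod p, ((starRingEnd ℂ) (x n) * x n') *
          ∑ m : {m : ZMod p // IsSquare m}, (starRingEnd ℂ) (Paley p m n) * Paley p m n' := by
        rw [Finset.sum_comm]
        refine Finset.sum_congr rfl fun n _ => ?_
        rw [Finset.sum_comm]
        exact Finset.sum_congr rfl fun n' _ => by rw [Finset.mul_sum]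
    _ = ∑ n : ZMod p, ∑ n' : ZMod p, ((starRingEnd ℂ) (x n) * x n') *
          ((if n = n' then 1 else 0) + (g/p) * χ (n' - n)) := by
        refine Finset.sum_congr rfl fun n _ => Finset.sum_congr rfl fun n' _ => ?_
        rw [paley_gram p hp2 n n']
    _ = (∑ n : ZMod p, (starRingEnd ℂ) (x n) * x n) + (g/p) *
          ∑ n : ZMod p, ∑ n' : ZMod p, ((starRingEnd ℂ) (x n) * x n') * χ (n' - n) := by
        simp_rw [mul_add, Finset.sum_add_distrib]
        congr 1
        · refine Finset.sum_congr rfl fun n _ => ?_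
          simp_rw [mul_ite, mul_one, mul_zero]
          rw [Finset.sum_ite_eq]
          simp
        · rw [Finset.mul_sum]
          refine Finset.sum_congr rfl fun n _ => ?_
          rw [Finset.mul_sum]
          exact Finset.sum_congr rfl fun n' _ => by ring
    _ = _ := by
        congr 1
        push_cast
        exact Finset.sum_congr rfl fun n _ => (hconj _).symm

end PaleyRIP

namespace PaleyRIP

open Finset

lemma skew_sum_zero {ι : Type*} [Fintype ι] (C f : ι → ι → ℝ)
    (hski : ∀ a b, C b a = -C a b) (hsym : ∀ a b, f b a = f a b) :
    ∑ a, ∑ b, C a b * f a b = 0 := by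
  have h1 : ∑ a, ∑ b, C a b * f a b = ∑ b, ∑ a, C a b * f a b := Finset.sum_comm
  have h2 : (∑ b : ι, ∑ a : ι, C a b * f a b) = -∑ a, ∑ b, C a b * f a b := by
    have hpt : ∀ a b : ι, C b a * f b a = -(C a b * f a b) := by
      intro a b; rw [hski, hsym]; ring
    calc (∑ b : ι, ∑ a : ι, C a b * f a b) = ∑ a : ι, ∑ b : ι, C b a * f b a := rfl
      _ = ∑ a : ι, ∑ b : ι, -(C a b * f a b) :=
          Finset.sum_congr rfl fun a _ => Finset.sum_congr rfl fun b _ => hpt a b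
      _ = -∑ a, ∑ b, C a b * f a b := by simp_rw [Finset.sum_neg_distrib]
  linarith [h1.trans h2]

lemma B_decomp {ι : Type*} [Fintype ι] (C : ι → ι → ℝ) (x : ι → ℂ)
    (hski : ∀ a b, C b a = -C a b) :
    (∑ a : ι, ∑ b : ι, ((starRingEnd ℂ) (x a) * x b) * ((C a b : ℝ) : ℂ))
      = ((∑ a : ι, ∑ b : ι, C a b * ((x a).re * (x b).im - (x a).im * (x b).re) : ℝ) : ℂ) * I := by
  have hterm : ∀ a b : ι, ((starRingEnd ℂ) (x a) * x b) * ((C a b : ℝ) : ℂ)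
      = ((C a b * ((x a).re * (x b).re + (x a).im * (x b).im) : ℝ) : ℂ)
        + ((C a b * ((x a).re * (x b).im - (x a).im * (x b).re) : ℝ) : ℂ) * I := by
    intro a b
    apply Complex.ext <;>
      simp only [Complex.add_re, Complex.add_im, Complex.mul_re, Complex.mul_im,
        Complex.ofReal_re, Complex.ofReal_im, Complex.I_re, Complex.I_im,
        Complex.conj_re, Complex.conj_im, RingHomCompTriple.comp_apply] <;> ring
  have cast2 : ∀ f : ι → ι → ℝ, (∑ a : ι, ∑ b : ι, ((f a b : ℝ) : ℂ))
      = ((∑ a : ι, ∑ b : ι, f a b : ℝ) : ℂ) := by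
    intro f; push_cast; rfl
  simp_rw [hterm, Finset.sum_add_distrib, ← Finset.sum_mul]
  rw [cast2, cast2,
    skew_sum_zero C _ hski (fun a b => by ring)]
  simp

lemma main_est {ι : Type*} [Fintype ι] [DecidableEq ι] (C : ι → ι → ℝ) (u v : ι → ℝ)
    (T : Finset ι) (hC0 : ∀ a, C a a = 0) (hC1 : ∀ a b, C a b ^ 2 ≤ 1)
    (hu0 : ∀ i ∉ T, u i = 0) (hv0 : ∀ i ∉ T, v i = 0) :
    (∑ a, ∑ b, C a b * (u a * v b - v a * u b))^2
      ≤ ((T.card : ℝ)^2 - T.card) * (2 * ((∑ a, u a^2) * (∑ a, v a^2))) := by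
  have hQT : (∑ a, ∑ b, C a b * (u a * v b - v a * u b))
      = ∑ q ∈ T ×ˢ T, C q.1 q.2 * (u q.1 * v q.2 - v q.1 * u q.2) := by
    rw [← Finset.sum_product']
    refine (Finset.sum_subset (Finset.product_subset_product (Finset.subset_univ T)
      (Finset.subset_univ T)) ?_).symm
    intro q _ hq'
    rw [Finset.mem_product] at hq'
    push_neg at hq'
    by_cases h1 : q.1 ∈ T
    · rw [hv0 _ (hq' h1), hu0 _ (hq' h1)]; ring
    · rw [hu0 _ h1, hv0 _ h1]; ring
  rw [hQT]
  have hCS := Finset.sum_mul_sq_le_sq_mul_sq (T ×ˢ T) (fun q => C q.1 q.2)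
    (fun q => u q.1 * v q.2 - v q.1 * u q.2)
  have hC2 : ∑ q ∈ T ×ˢ T, (C q.1 q.2)^2 ≤ (T.card : ℝ)^2 - T.card := by
    have hpoint : ∀ q ∈ T ×ˢ T, (C q.1 q.2)^2 ≤ (if q.1 = q.2 then (0:ℝ) else 1) := by
      intro q _
      by_cases h : q.1 = q.2
      · rw [if_pos h, h, hC0]; norm_num
      · rw [if_neg h]; exact hC1 _ _
    have hsum : ∑ q ∈ T ×ˢ T, (if q.1 = q.2 then (0:ℝ) else 1)
        = (T.card : ℝ) * ((T.card : ℝ) - 1) := by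
      rw [Finset.sum_product]
      have hrow : ∀ a ∈ T, (∑ b ∈ T, if a = b then (0:ℝ) else 1) = (T.card : ℝ) - 1 := by
        intro a ha
        have hpt : ∀ b : ι, (if a = b then (0:ℝ) else 1)
            = 1 - (if a = b then (1:ℝ) else 0) := fun b => by split_ifs <;> norm_num
        simp_rw [hpt]
        rw [Finset.sum_sub_distrib, Finset.sum_const, Finset.sum_ite_eq, if_pos ha]
        simp
      rw [Finset.sum_congr rfl hrow, Finset.sum_const]
      simp [nsmul_eq_mul]
    calc ∑ q ∈ T ×ˢ T, (C q.1 q.2)^2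
        ≤ ∑ q ∈ T ×ˢ T, (if q.1 = q.2 then (0:ℝ) else 1) := Finset.sum_le_sum hpoint
      _ = (T.card : ℝ) * ((T.card : ℝ) - 1) := hsum
      _ ≤ (T.card : ℝ)^2 - T.card := le_of_eq (by ring)
  have hM2 : ∑ q ∈ T ×ˢ T, (u q.1 * v q.2 - v q.1 * u q.2)^2
      ≤ 2 * ((∑ a, u a^2) * (∑ a, v a^2)) := by
    have hsubset : ∑ q ∈ T ×ˢ T, (u q.1 * v q.2 - v q.1 * u q.2)^2
        ≤ ∑ q ∈ Finset.univ ×ˢ Finset.univ, (u q.1 * v q.2 - v q.1 * u q.2)^2 :=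
      Finset.sum_le_sum_of_subset_of_nonneg
        (Finset.product_subset_product (Finset.subset_univ T) (Finset.subset_univ T))
        (fun _ _ _ => sq_nonneg _)
    have hexp : ∑ q ∈ Finset.univ ×ˢ Finset.univ, (u q.1 * v q.2 - v q.1 * u q.2)^2
        = 2 * ((∑ a, u a^2) * (∑ a, v a^2)) - 2 * (∑ a, u a * v a)^2 := by
      rw [Finset.sum_product]
      have hrow : ∀ a : ι, (∑ b : ι, (u a * v b - v a * u b)^2)
          = (u a)^2 * (∑ i, v i^2) + (v a)^2 * (∑ i, u i^2)
            - (u a * v a) * (2 * (∑ i, u i * v i)) := by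
        intro a
        have hpt : ∀ b : ι, (u a * v b - v a * u b)^2
            = ((u a)^2 * (v b)^2 + (v a)^2 * (u b)^2) - (u a * v a) * (2 * (u b * v b)) :=
          fun b => by ring
        simp_rw [hpt]
        rw [Finset.sum_sub_distrib, Finset.sum_add_distrib]
        simp_rw [← Finset.mul_sum]
      simp_rw [hrow]
      rw [Finset.sum_sub_distrib, Finset.sum_add_distrib]
      simp_rw [← Finset.sum_mul]
      ring
    nlinarith [sq_nonneg (∑ a, u a * v a)]
  have hM20 : 0 ≤ ∑ q ∈ T ×ˢ T, (u q.1 * v q.2 - v q.1 * u q.2)^2 :=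
    Finset.sum_nonneg fun _ _ => sq_nonneg _
  have hC20 : 0 ≤ ∑ q ∈ T ×ˢ T, (C q.1 q.2)^2 :=
    Finset.sum_nonneg fun _ _ => sq_nonneg _
  calc (∑ q ∈ T ×ˢ T, C q.1 q.2 * (u q.1 * v q.2 - v q.1 * u q.2))^2
      ≤ (∑ q ∈ T ×ˢ T, (C q.1 q.2)^2) *
        ∑ q ∈ T ×ˢ T, (u q.1 * v q.2 - v q.1 * u q.2)^2 := hCS
    _ ≤ ((T.card : ℝ)^2 - T.card) * (2 * ((∑ a, u a^2) * (∑ a, v a^2))) :=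
        mul_le_mul hC2 hM2 hM20 (le_trans hC20 hC2)

end PaleyRIP

namespace PaleyRIP

lemma final_real (R N Q sp W d Kk Pu Pv : ℝ)
    (hRN : |R - N| = |Q| / sp) (hsp : 0 < sp) (hW : W = d * sp)
    (hQ2 : Q^2 ≤ Kk * (2 * (Pu * Pv))) (hNP : N = Pu + Pv)
    (hPu : 0 ≤ Pu) (hPv : 0 ≤ Pv) (hKk : 0 ≤ Kk)
    (hWsq : Kk / 2 ≤ W^2) (hW0 : 0 ≤ W) :
    (1 - d) * N ≤ R ∧ R ≤ (1 + d) * N := by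
  have hN0 : 0 ≤ N := by linarith
  have h4 : 4 * (Pu * Pv) ≤ (Pu + Pv)^2 := by nlinarith [sq_nonneg (Pu - Pv)]
  have hQ2' : Q^2 ≤ (W * N)^2 := by
    nlinarith [mul_le_mul_of_nonneg_left h4 hKk,
      mul_le_mul_of_nonneg_right hWsq (sq_nonneg N),
      (by rw [hNP] : N^2 = (Pu + Pv)^2)]
  have hQabs : |Q| ≤ W * N := by
    nlinarith [_root_.sq_abs Q, abs_nonneg Q, mul_nonneg hW0 hN0]
  have hfin : |R - N| ≤ d * N := by
    rw [hRN, div_le_iff₀ hsp]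
    calc |Q| ≤ W * N := hQabs
      _ = d * N * sp := by rw [hW]; ring
  have habs := abs_le.mp hfin
  constructor
  · nlinarith [habs.1]
  · nlinarith [habs.2]

end PaleyRIP


/-- The RIP constant of order `k` of the Paley matrix is at most
`(k - 1 - 1/(c(k-1)))/√p` with `c = 1/(2(2-√3))`: the restricted isometry
inequalities hold with this constant for every `k`-sparse vector. -/
theorem stmt_14 (p : ℕ) [NeZero p] (hp : p.Prime) (hp7 : 7 ≤ p)
    (hp3 : p % 4 = 3) (k : ℕ) (hk3 : 3 ≤ k) (hkp : k ≤ p)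
    (c δ : ℝ) (hc : c = 1 / (2 * (2 - Real.sqrt 3)))
    (hδ : δ = ((k : ℝ) - 1 - 1 / (c * ((k : ℝ) - 1))) / Real.sqrt p)
    (x : ZMod p → ℂ) (T : Finset (ZMod p)) (hT : T.card ≤ k)
    (hsupp : ∀ i ∉ T, x i = 0) :
    (1 - δ) * ∑ i, ‖x i‖ ^ 2 ≤ ∑ m, ‖(Paley p *ᵥ x) m‖ ^ 2 ∧
    ∑ m, ‖(Paley p *ᵥ x) m‖ ^ 2 ≤ (1 + δ) * ∑ i, ‖x i‖ ^ 2 := by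
  haveI : Fact p.Prime := ⟨hp⟩
  have hp2 : p ≠ 2 := by omega
  have hppos : (0:ℝ) < p := by positivity
  have hsppos : (0:ℝ) < Real.sqrt p := Real.sqrt_pos.mpr hppos
  -- the skew real matrix
  have hskew : ∀ a b : ZMod p,
      (((quadraticChar (ZMod p) (a - b) : ℤ) : ℝ)) =
        -(((quadraticChar (ZMod p) (b - a) : ℤ) : ℝ)) := by
    intro a b
    rw [show a - b = -(b - a) by ring, PaleyRIP.chi_neg p hp3]
    push_cast
    ring
  -- the quadratic form identity, with B converted to real skew form
  have hq := PaleyRIP.quad_form p hp2 x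
  have hBeq : (∑ n : ZMod p, ∑ n' : ZMod p,
        ((starRingEnd ℂ) (x n) * x n') * PaleyRIP.qchar p (n' - n))
      = ∑ n : ZMod p, ∑ n' : ZMod p, ((starRingEnd ℂ) (x n) * x n') *
          ((((quadraticChar (ZMod p) (n' - n) : ℤ) : ℝ)) : ℂ) :=
    Finset.sum_congr rfl fun n _ => Finset.sum_congr rfl fun n' _ => by
      rw [PaleyRIP.qchar_apply, Complex.ofReal_intCast]
  rw [hBeq, PaleyRIP.B_decomp (fun a b => (((quadraticChar (ZMod p) (b - a) : ℤ) : ℝ))) x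
    (fun a b => by exact hskew a b)] at hq
  -- notation
  set Q : ℝ := ∑ a : ZMod p, ∑ b : ZMod p,
    (((quadraticChar (ZMod p) (b - a) : ℤ) : ℝ)) * ((x a).re * (x b).im - (x a).im * (x b).re)
    with hQdef
  clear_value Q
  -- |R - N| = |Q| / sqrt p
  have hps : Real.sqrt p * Real.sqrt p = p := Real.mul_self_sqrt (le_of_lt hppos)
  have hRNabs : |(∑ m : {m : ZMod p // IsSquare m}, ‖(Paley p *ᵥ x) m‖ ^ 2)
      - ∑ i, ‖x i‖ ^ 2| = |Q| / Real.sqrt p := by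
    have hcx : (((∑ m : {m : ZMod p // IsSquare m}, ‖(Paley p *ᵥ x) m‖ ^ 2)
        - ∑ i, ‖x i‖ ^ 2 : ℝ) : ℂ)
        = (gaussSum (PaleyRIP.qchar p) ZMod.stdAddChar / p) * ((Q : ℝ) : ℂ) * I := by
      rw [Complex.ofReal_sub]
      linear_combination hq
    calc |(∑ m : {m : ZMod p // IsSquare m}, ‖(Paley p *ᵥ x) m‖ ^ 2) - ∑ i, ‖x i‖ ^ 2|
        = ‖(((∑ m : {m : ZMod p // IsSquare m}, ‖(Paley p *ᵥ x) m‖ ^ 2)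
            - ∑ i, ‖x i‖ ^ 2 : ℝ) : ℂ)‖ := by rw [Complex.norm_real, Real.norm_eq_abs]
      _ = ‖gaussSum (PaleyRIP.qchar p) ZMod.stdAddChar‖ / p * |Q| := by
          rw [hcx, norm_mul, norm_mul, norm_div, Complex.norm_I, mul_one,
            Complex.norm_real, Real.norm_eq_abs, Complex.norm_natCast]
      _ = |Q| / Real.sqrt p := by
          rw [PaleyRIP.abs_gaussSum p hp2]
          field_simp
          linear_combination |Q| * hps
  -- bound |Q|
  have hme := PaleyRIP.main_est (fun a b => (((quadraticChar (ZMod p) (b - a) : ℤ) : ℝ)))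
    (fun n => (x n).re) (fun n => (x n).im) T
    (fun a => by
      show (((quadraticChar (ZMod p) (a - a) : ℤ) : ℝ)) = 0
      simp [sub_self, quadraticChar_zero])
    (fun a b => by
      show (((quadraticChar (ZMod p) (b - a) : ℤ) : ℝ))^2 ≤ 1
      rcases (quadraticChar_isQuadratic (ZMod p)) (b - a) with h | h | h <;>
        rw [h] <;> norm_num)
    (fun i hi => by show (x i).re = 0; rw [hsupp i hi]; simp)
    (fun i hi => by show (x i).im = 0; rw [hsupp i hi]; simp)
  rw [← hQdef] at hme
  clear hq hBeq hskew hQdef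
  have hkR : (3:ℝ) ≤ (k:ℝ) := by exact_mod_cast hk3
  have hTk : (T.card : ℝ) ≤ (k:ℝ) := by exact_mod_cast hT
  have hT0 : (0:ℝ) ≤ (T.card : ℝ) := by positivity
  have hPu0 : (0:ℝ) ≤ ∑ n : ZMod p, (x n).re ^ 2 := Finset.sum_nonneg fun _ _ => sq_nonneg _
  have hPv0 : (0:ℝ) ≤ ∑ n : ZMod p, (x n).im ^ 2 := Finset.sum_nonneg fun _ _ => sq_nonneg _
  -- N = Pu + Pv
  have hNPuv : (∑ i, ‖x i‖ ^ 2)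
      = (∑ n : ZMod p, (x n).re ^ 2) + ∑ n : ZMod p, (x n).im ^ 2 := by
    rw [← Finset.sum_add_distrib]
    refine Finset.sum_congr rfl fun i _ => ?_
    rw [Complex.sq_norm, Complex.normSq_apply]
    ring
  have hN0 : (0:ℝ) ≤ ∑ i, ‖x i‖ ^ 2 := Finset.sum_nonneg fun _ _ => sq_nonneg _
  -- scalar estimates
  have hs3 : Real.sqrt 3 ^ 2 = 3 := Real.sq_sqrt (by norm_num)
  have hs1 : 1 ≤ Real.sqrt 3 := by
    rw [show (1:ℝ) = Real.sqrt 1 by simp]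
    exact Real.sqrt_le_sqrt (by norm_num)
  have hs2 : Real.sqrt 3 < 2 := by nlinarith [Real.sqrt_nonneg 3]
  have hK2 : (2:ℝ) ≤ (k:ℝ) - 1 := by linarith
  have hKpos : (0:ℝ) < (k:ℝ) - 1 := by linarith
  have hWval : δ * Real.sqrt p = ((k:ℝ) - 1) - 2*(2 - Real.sqrt 3)/((k:ℝ) - 1) := by
    rw [hδ, hc]
    have h23 : (2:ℝ) - Real.sqrt 3 ≠ 0 := by linarith
    field_simp
  have hWge : ((k:ℝ) - 1) * Real.sqrt 3 / 2 ≤ δ * Real.sqrt p := by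
    rw [hWval]
    have h1 : 2*(2 - Real.sqrt 3)/((k:ℝ) - 1)
        ≤ ((k:ℝ) - 1) - ((k:ℝ) - 1) * Real.sqrt 3 / 2 := by
      rw [div_le_iff₀ hKpos]
      have hK4 : (0:ℝ) ≤ ((k:ℝ)-1)^2 - 4 := by
        have := mul_nonneg (by linarith : (0:ℝ) ≤ (k:ℝ)-1-2) (by linarith : (0:ℝ) ≤ (k:ℝ)-1+2)
        have he : ((k:ℝ)-1-2) * ((k:ℝ)-1+2) = ((k:ℝ)-1)^2 - 4 := by ring
        linarith
      have hA : 0 ≤ (((k:ℝ)-1)^2 - 4) * (2 - Real.sqrt 3) :=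
        mul_nonneg hK4 (by linarith)
      nlinarith [hA]
    linarith
  have hlow0 : 0 ≤ ((k:ℝ)-1) * Real.sqrt 3 / 2 :=
    div_nonneg (mul_nonneg (by linarith) (Real.sqrt_nonneg 3)) (by norm_num)
  have hW0 : 0 ≤ δ * Real.sqrt p := le_trans hlow0 hWge
  have hWsq : ((k:ℝ)^2 - k)/2 ≤ (δ * Real.sqrt p)^2 := by
    have h1 : (((k:ℝ)-1) * Real.sqrt 3 / 2)^2 ≤ (δ * Real.sqrt p)^2 :=
      pow_le_pow_left₀ hlow0 hWge 2
    have h2 : (((k:ℝ)-1) * Real.sqrt 3 / 2)^2 = 3 * ((k:ℝ)-1)^2 / 4 := by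
      have h3 : (((k:ℝ)-1) * Real.sqrt 3 / 2)^2 = ((k:ℝ)-1)^2 * (Real.sqrt 3^2) / 4 := by ring
      rw [h3, hs3]
      ring
    have hprod : 0 ≤ ((k:ℝ)-1)*((k:ℝ)-3) := mul_nonneg (by linarith) (by linarith)
    have hexp : ((k:ℝ)-1)*((k:ℝ)-3) = (k:ℝ)^2 - 4*(k:ℝ) + 3 := by ring
    have he2 : ((k:ℝ)-1)^2 = (k:ℝ)^2 - 2*(k:ℝ) + 1 := by ring
    linarith
  -- assemble
  have hcard : ((T.card : ℝ)^2 - T.card) ≤ (k:ℝ)^2 - k := by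
    have hm := mul_nonneg (sub_nonneg.mpr hTk) (by linarith : (0:ℝ) ≤ (k:ℝ) + T.card - 1)
    have he : ((k:ℝ) - T.card) * ((k:ℝ) + T.card - 1)
        = ((k:ℝ)^2 - k) - ((T.card : ℝ)^2 - T.card) := by ring
    linarith
  have hKk0 : (0:ℝ) ≤ (k:ℝ)^2 - k := by
    have hm := mul_nonneg (by linarith : (0:ℝ) ≤ (k:ℝ)) (by linarith : (0:ℝ) ≤ (k:ℝ) - 1)
    have he : (k:ℝ) * ((k:ℝ) - 1) = (k:ℝ)^2 - k := by ring
    linarith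
  have hQ2 : Q^2 ≤ ((k:ℝ)^2 - k) *
      (2 * ((∑ n : ZMod p, (x n).re ^ 2) * ∑ n : ZMod p, (x n).im ^ 2)) := by
    have hM0 : (0:ℝ) ≤ 2 * ((∑ n : ZMod p, (x n).re ^ 2) * ∑ n : ZMod p, (x n).im ^ 2) := by
      positivity
    calc Q^2 ≤ ((T.card : ℝ)^2 - T.card) *
        (2 * ((∑ n : ZMod p, (x n).re ^ 2) * ∑ n : ZMod p, (x n).im ^ 2)) := hme
      _ ≤ _ := mul_le_mul_of_nonneg_right hcard hM0
  exact PaleyRIP.final_real _ _ Q (Real.sqrt p) (δ * Real.sqrt p) δ ((k:ℝ)^2 - k)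
    (∑ n : ZMod p, (x n).re ^ 2) (∑ n : ZMod p, (x n).im ^ 2)
    hRNabs hsppos rfl hQ2 hNPuv hPu0 hPv0 hKk0 hWsq hW0
end
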